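/- arXiv:1012.2799 — 2 statements merged into one kernel-verified Lean document; each statement's English description precedes it below -/
import Mathlib

section
/- Let s = (s_0,…,s_{m−1}) be a probability vector with all s_j > 0, ν = φμ_s, and h = −Σ_{j=0}^{m−1} s_j ln s_j. Then the set W = {x ∈ (0,1) : limsup_{n→∞} (−(1/n) ln ν(I_n(x))) ≤ h} has Hausdorff dimension HD(W) ≤ h / ln m. (Upper bound (4.13), Billingsley-type lemma for base-m basic intervals.) -/
open MeasureTheory Filter
open scoped ENNReal
open scoped Topology

/-- The `i`-th digit `a_i(x) ∈ {0,…,m−1}` of the base-`m` expansion of `x ∈ [0,1)`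
(the expansion which does not end with an infinite tail of digits `m−1`). -/
noncomputable def bDigit (m i : ℕ) (x : ℝ) : ℕ := ⌊x * (m : ℝ) ^ (i + 1)⌋₊ % m

/-- The coding map `φ(ξ) = Σ_{i≥1} m^{−i} ξ_{i−1}` from sequences to `[0,1]`. -/
noncomputable def phiMap (m : ℕ) (ξ : ℕ → ℕ) : ℝ := ∑' i : ℕ, (ξ i : ℝ) / (m : ℝ) ^ (i + 1)

/-- The rank-`n` basic interval `I_n(x)` containing `x`: the set of `y ∈ [0,1)` whose first
`n` base-`m` digits agree with those of `x`. -/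
noncomputable def basicInterval (m n : ℕ) (x : ℝ) : Set ℝ :=
  {y ∈ Set.Ico (0 : ℝ) 1 | ∀ i < n, bDigit m i y = bDigit m i x}

lemma digit_sum (m : ℕ) (hm : 1 < m) : ∀ n, ∀ a < m^n,
    ∑ j ∈ Finset.range n, a / m^j % m * m^j = a := by
  intro n
  induction n with
  | zero => intro a ha; simpa using (Nat.lt_one_iff.mp (by simpa using ha)).symm
  | succ n ih =>
    intro a ha
    rw [Finset.sum_range_succ']
    have h1 : ∀ j, a / m^(j+1) % m * m^(j+1) = m * (a/m / m^j % m * m^j) := by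
      intro j
      calc a / m^(j+1) % m * m^(j+1) = (a/m/m^j % m) * (m * m^j) := by
            rw [Nat.div_div_eq_div_mul, ← pow_succ']
        _ = m * (a/m/m^j % m * m^j) := by ring
    have h2 : a / m < m ^ n := by
      rw [Nat.div_lt_iff_lt_mul (by omega)]
      calc a < m^(n+1) := ha
        _ = m^n * m := by rw [pow_succ]
    calc (∑ j ∈ Finset.range n, a / m^(j+1) % m * m^(j+1)) + a / m^0 % m * m^0
        = m * (∑ j ∈ Finset.range n, a/m / m^j % m * m^j) + a % m := by
          rw [Finset.mul_sum]; simp [h1]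
      _ = m * (a / m) + a % m := by rw [ih _ h2]
      _ = a := Nat.div_add_mod a m

lemma digit_inj (m : ℕ) (hm : 1 < m) {n a b : ℕ} (ha : a < m^n) (hb : b < m^n)
    (h : ∀ j < n, a / m^j % m = b / m^j % m) : a = b := by
  rw [← digit_sum m hm n a ha, ← digit_sum m hm n b hb]
  exact Finset.sum_congr rfl fun j hj => by rw [h j (Finset.mem_range.mp hj)]

lemma bDigit_lt (m : ℕ) (hm : 1 < m) (i : ℕ) (x : ℝ) : bDigit m i x < m :=
  Nat.mod_lt _ (by omega)

lemma bDigit_eq (m : ℕ) (hm : 1 < m) {i n : ℕ} (hin : i < n) (x : ℝ) :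
    bDigit m i x = ⌊x * (m:ℝ)^n⌋₊ / m^(n-1-i) % m := by
  have hpow : (m:ℝ)^n = (m:ℝ)^(i+1) * (m:ℝ)^(n-1-i) := by
    rw [← pow_add]; congr 1; omega
  have : x * (m:ℝ)^(i+1) = x * (m:ℝ)^n / ((m^(n-1-i) : ℕ) : ℝ) := by
    push_cast
    rw [hpow]
    field_simp
  rw [bDigit, this, Nat.floor_div_natCast]

lemma floor_lt_pow (m n : ℕ) (hm : 1 < m) {x : ℝ} (hx : x ∈ Set.Ico (0:ℝ) 1) :
    ⌊x * (m:ℝ)^n⌋₊ < m^n := by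
  have h0 : (0:ℝ) < (m:ℝ)^n := by positivity
  rw [Nat.floor_lt (mul_nonneg hx.1 h0.le)]
  push_cast
  calc x * (m:ℝ)^n < 1 * (m:ℝ)^n := by
        exact mul_lt_mul_of_pos_right hx.2 h0
    _ = (m:ℝ)^n := one_mul _

lemma mem_Ico_iff_floor (m n : ℕ) (hm : 1 < m) {k : ℕ} (hk : k < m^n) {y : ℝ} :
    y ∈ Set.Ico ((k:ℝ)/(m:ℝ)^n) (((k:ℝ)+1)/(m:ℝ)^n) ↔
      (y ∈ Set.Ico (0:ℝ) 1 ∧ ⌊y * (m:ℝ)^n⌋₊ = k) := by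
  have h0 : (0:ℝ) < (m:ℝ)^n := by positivity
  constructor
  · rintro ⟨h1, h2⟩
    have hy0 : 0 ≤ y := le_trans (by positivity) h1
    have hky : (k:ℝ) ≤ y * (m:ℝ)^n := by
      rwa [div_le_iff₀ h0] at h1
    have hyk : y * (m:ℝ)^n < (k:ℝ) + 1 := by
      rwa [lt_div_iff₀ h0] at h2
    have hk1 : ((k:ℝ)+1) ≤ (m:ℝ)^n := by
      have : (k+1 : ℕ) ≤ m^n := hk
      exact_mod_cast this
    have hy1 : y < 1 := h2.trans_le ((div_le_one h0).mpr hk1)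
    exact ⟨⟨hy0, hy1⟩, by rw [Nat.floor_eq_iff (by positivity)]; exact ⟨hky, hyk⟩⟩
  · rintro ⟨⟨hy0, hy1⟩, hfl⟩
    have hky : (k:ℝ) ≤ y * (m:ℝ)^n := hfl ▸ Nat.floor_le (by positivity)
    have hyk : y * (m:ℝ)^n < (k:ℝ) + 1 := by
      have := Nat.lt_floor_add_one (y * (m:ℝ)^n)
      rw [hfl] at this; exact_mod_cast this
    exact ⟨(div_le_iff₀ h0).mpr (by linarith), (lt_div_iff₀ h0).mpr (by linarith)⟩

lemma basicInterval_eq (m : ℕ) (hm : 1 < m) {x : ℝ} (hx : x ∈ Set.Ico (0:ℝ) 1) (n : ℕ) :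
    basicInterval m n x =
      Set.Ico ((⌊x * (m:ℝ)^n⌋₊ : ℝ)/(m:ℝ)^n) (((⌊x * (m:ℝ)^n⌋₊ : ℝ)+1)/(m:ℝ)^n) := by
  set k := ⌊x * (m:ℝ)^n⌋₊ with hkdef
  have hkn : k < m^n := floor_lt_pow m n hm hx
  ext y
  rw [mem_Ico_iff_floor m n hm hkn]
  show (y ∈ Set.Ico (0:ℝ) 1 ∧ ∀ i < n, bDigit m i y = bDigit m i x) ↔ _
  constructor
  · rintro ⟨hy01, hdig⟩
    refine ⟨hy01, ?_⟩
    have hyn : ⌊y * (m:ℝ)^n⌋₊ < m^n := floor_lt_pow m n hm hy01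
    apply digit_inj m hm hyn hkn
    intro j hj
    have hij : n - 1 - j < n := by omega
    have := hdig (n-1-j) hij
    rw [bDigit_eq m hm hij y, bDigit_eq m hm hij x] at this
    rwa [show n-1-(n-1-j) = j by omega] at this
  · rintro ⟨hy01, hfl⟩
    refine ⟨hy01, fun i hi => ?_⟩
    rw [bDigit_eq m hm hi y, bDigit_eq m hm hi x, hfl]

lemma measurable_phiMap (m : ℕ) : Measurable (phiMap m) := by
  have heq : phiMap m = fun ξ => (∑' i, ENNReal.ofReal ((ξ i : ℝ) / (m:ℝ)^(i+1))).toReal := by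
    funext ξ
    rw [ENNReal.tsum_toReal_eq (fun i => ENNReal.ofReal_ne_top)]
    exact (tsum_congr fun i => (ENNReal.toReal_ofReal (by positivity)).symm)
  rw [heq]
  apply Measurable.ennreal_toReal
  apply Measurable.ennreal_tsum
  intro i
  exact ENNReal.measurable_ofReal.comp
    ((measurable_from_top.comp (measurable_pi_apply i)).div_const _)

lemma summable_geom_bound (m : ℕ) (hm : 1 < m) {ξ : ℕ → ℕ} (hξ : ∀ i, ξ i < m) :
    Summable (fun i : ℕ => (ξ i : ℝ) / (m:ℝ)^(i+1)) := by
  have hm1 : (1:ℝ) < m := by exact_mod_cast hm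
  have hgeom : Summable (fun i : ℕ => (1/(m:ℝ))^i) :=
    summable_geometric_of_lt_one (by positivity) (by rw [div_lt_one (by linarith)]; linarith)
  have hm0 : (0:ℝ) < (m:ℝ) := by positivity
  apply Summable.of_nonneg_of_le (fun i => by positivity) _ hgeom
  intro i
  have h1 : (ξ i : ℝ) ≤ (m:ℝ) := by
    have := (hξ i).le
    exact_mod_cast this
  have h2 : (0:ℝ) < (m:ℝ)^(i+1) := pow_pos hm0 _
  calc (ξ i : ℝ)/(m:ℝ)^(i+1) ≤ (m:ℝ)/(m:ℝ)^(i+1) := by gcongr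
    _ = (1/(m:ℝ))^i := by
        rw [div_pow, one_pow, pow_succ']
        field_simp

lemma digit_sum_real (m : ℕ) (hm : 1 < m) {x : ℝ} (hx : x ∈ Set.Ico (0:ℝ) 1) (n : ℕ) :
    ∑ i ∈ Finset.range n, (bDigit m i x : ℝ) / (m:ℝ)^(i+1)
      = (⌊x * (m:ℝ)^n⌋₊ : ℝ) / (m:ℝ)^n := by
  set k := ⌊x * (m:ℝ)^n⌋₊ with hkdef
  have hkn : k < m^n := floor_lt_pow m n hm hx
  have hrefl := Finset.sum_range_reflect (fun j => k / m^j % m * m^j) n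
  have hnat : ∑ i ∈ Finset.range n, k / m^(n-1-i) % m * m^(n-1-i) = k := by
    rw [hrefl, digit_sum m hm n k hkn]
  clear_value k
  have hterm : ∀ i ∈ Finset.range n, (bDigit m i x : ℝ)/(m:ℝ)^(i+1)
      = ((k / m^(n-1-i) % m * m^(n-1-i) : ℕ) : ℝ) / (m:ℝ)^n := by
    intro i hi
    have hin := Finset.mem_range.mp hi
    rw [bDigit_eq m hm hin, ← hkdef]
    have hp : (m:ℝ)^(n-1-i) * (m:ℝ)^(i+1) = (m:ℝ)^n := by
      rw [← pow_add]; congr 1; omega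
    rw [div_eq_div_iff (by positivity) (by positivity)]
    push_cast
    rw [← hp]; ring
  rw [Finset.sum_congr rfl hterm, ← Finset.sum_div]
  congr 1
  exact_mod_cast congrArg Nat.cast hnat

lemma phi_mem_Ico (m : ℕ) (hm : 1 < m) {x : ℝ} (hx : x ∈ Set.Ico (0:ℝ) 1) (n : ℕ)
    {ξ : ℕ → ℕ} (hξm : ∀ i, ξ i < m)
    (hpre : ∀ i < n, ξ i = bDigit m i x) (hn : ξ n = 0) :
    phiMap m ξ ∈ Set.Ico ((⌊x * (m:ℝ)^n⌋₊ : ℝ)/(m:ℝ)^n) (((⌊x * (m:ℝ)^n⌋₊ : ℝ)+1)/(m:ℝ)^n) := by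
  have hm1 : (1:ℝ) < (m:ℝ) := by exact_mod_cast hm
  have hm0 : (0:ℝ) < (m:ℝ) := by linarith
  set g : ℕ → ℝ := fun i => (ξ i : ℝ) / (m:ℝ)^(i+1) with hg
  have hsum : Summable g := summable_geom_bound m hm hξm
  have hsplit := Summable.sum_add_tsum_nat_add (f := g) (n+1) hsum
  have hhead : ∑ i ∈ Finset.range (n+1), g i = (⌊x * (m:ℝ)^n⌋₊ : ℝ)/(m:ℝ)^n := by
    rw [Finset.sum_range_succ]
    have : ∀ i ∈ Finset.range n, g i = (bDigit m i x : ℝ) / (m:ℝ)^(i+1) := by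
      intro i hi
      simp only [hg, hpre i (Finset.mem_range.mp hi)]
    rw [Finset.sum_congr rfl this, digit_sum_real m hm hx n]
    simp [hg, hn]
  have htail0 : 0 ≤ ∑' i, g (i + (n+1)) := tsum_nonneg (fun i => by positivity)
  have hgeom : Summable (fun i : ℕ => (1/(m:ℝ))^i) :=
    summable_geometric_of_lt_one (by positivity) (by rw [div_lt_one hm0]; exact hm1)
  have hrhseq : ∀ i : ℕ, ((m:ℝ)-1)/(m:ℝ)^(i+(n+1)+1)
      = (((m:ℝ)-1)/(m:ℝ)^(n+2)) * (1/(m:ℝ))^i := by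
    intro i
    rw [div_pow, one_pow, div_mul_div_comm, mul_one]
    congr 1
    rw [← pow_add]
    congr 1
    omega
  have hrhs : Summable (fun i : ℕ => ((m:ℝ)-1)/(m:ℝ)^(i+(n+1)+1)) := by
    apply Summable.congr (hgeom.mul_left (((m:ℝ)-1)/(m:ℝ)^(n+2)))
    intro i; rw [hrhseq i]
  have htail1 : ∑' i, g (i + (n+1)) ≤ 1/(m:ℝ)^(n+1) := by
    have hle : ∀ i : ℕ, g (i + (n+1)) ≤ ((m:ℝ)-1)/(m:ℝ)^(i+(n+1)+1) := by
      intro i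
      have h1 : (ξ (i+(n+1)) : ℝ) ≤ (m:ℝ) - 1 := by
        have h2 : ξ (i+(n+1)) ≤ m - 1 := by have := hξm (i+(n+1)); omega
        have h3 : ((m-1 : ℕ) : ℝ) = (m:ℝ) - 1 := by
          have : (1:ℕ) ≤ m := hm.le
          push_cast [this]; ring
        calc (ξ (i+(n+1)) : ℝ) ≤ ((m-1 : ℕ) : ℝ) := by exact_mod_cast h2
          _ = (m:ℝ) - 1 := h3
      simp only [hg]
      gcongr
    calc ∑' i, g (i + (n+1)) ≤ ∑' i, ((m:ℝ)-1)/(m:ℝ)^(i+(n+1)+1) :=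
          Summable.tsum_le_tsum hle ((summable_nat_add_iff (n+1)).mpr hsum) hrhs
      _ = (((m:ℝ)-1)/(m:ℝ)^(n+2)) * ∑' i, (1/(m:ℝ))^i := by
          rw [← tsum_mul_left]
          exact tsum_congr hrhseq
      _ = 1/(m:ℝ)^(n+1) := by
          rw [tsum_geometric_of_lt_one (by positivity) (by rw [div_lt_one hm0]; exact hm1)]
          have hne : (m:ℝ) - 1 ≠ 0 := by linarith
          have h1m : 1 - 1/(m:ℝ) = ((m:ℝ)-1)/(m:ℝ) := by field_simp
          rw [h1m]
          field_simp
          ring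
  have hphi : phiMap m ξ = (⌊x * (m:ℝ)^n⌋₊ : ℝ)/(m:ℝ)^n + ∑' i, g (i + (n+1)) := by
    rw [phiMap, ← hsplit, hhead]
  constructor
  · rw [hphi]; linarith
  · rw [hphi]
    have hlt : 1/(m:ℝ)^(n+1) < 1/(m:ℝ)^n := by
      apply div_lt_div_of_pos_left one_pos (pow_pos hm0 n)
      rw [pow_succ]
      nlinarith [pow_pos hm0 n]
    have : (((⌊x * (m:ℝ)^n⌋₊ : ℝ))+1)/(m:ℝ)^n
        = (⌊x * (m:ℝ)^n⌋₊ : ℝ)/(m:ℝ)^n + 1/(m:ℝ)^n := by ring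
    rw [this]
    linarith

lemma bad_null (m : ℕ) (s : ℕ → ℝ) (hstop : ∀ j, m ≤ j → s j = 0)
    (μs : Measure (ℕ → ℕ))
    (hcyl : ∀ (n : ℕ) (β : ℕ → ℕ),
      μs {ξ | ∀ i ≤ n, ξ i = β i} = ∏ i ∈ Finset.range (n + 1), ENNReal.ofReal (s (β i))) :
    μs {ξ | ∃ i, m ≤ ξ i} = 0 := by
  have hB : ∀ j : ℕ, μs {ξ | (∀ l < j, ξ l < m) ∧ m ≤ ξ j} = 0 := by
    intro j
    set C : ((Fin j → Fin m) × ℕ) → Set (ℕ → ℕ) := fun p =>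
      if m ≤ p.2 then
        {ξ | ∀ l ≤ j, ξ l = (fun l => if h : l < j then (p.1 ⟨l, h⟩ : ℕ) else p.2) l}
      else ∅ with hC
    have hsub : {ξ : ℕ → ℕ | (∀ l < j, ξ l < m) ∧ m ≤ ξ j} ⊆ ⋃ p, C p := by
      rintro ξ ⟨h1, h2⟩
      refine Set.mem_iUnion.mpr ⟨⟨fun l => ⟨ξ l, h1 l l.2⟩, ξ j⟩, ?_⟩
      rw [hC]
      simp only [if_pos h2]
      intro l hl
      by_cases h : l < j
      · simp [h]
      · have hlj : l = j := by omega
        simp [h, hlj]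
    have hnull : ∀ p, μs (C p) = 0 := by
      intro p
      rw [hC]
      dsimp only
      split_ifs with hp
      · rw [hcyl j _]
        apply Finset.prod_eq_zero (Finset.self_mem_range_succ j)
        have hj : ¬ (j < j) := lt_irrefl j
        simp [hj, hstop p.2 hp]
      · exact measure_empty
    exact measure_mono_null hsub (measure_iUnion_null hnull)
  have hsub2 : {ξ : ℕ → ℕ | ∃ i, m ≤ ξ i}
      ⊆ ⋃ j, {ξ | (∀ l < j, ξ l < m) ∧ m ≤ ξ j} := by
    rintro ξ ⟨i, hi⟩
    have hex : ∃ i, m ≤ ξ i := ⟨i, hi⟩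
    exact Set.mem_iUnion.mpr ⟨Nat.find hex,
      fun l hl => not_le.mp (Nat.find_min hex hl), Nat.find_spec hex⟩
  exact measure_mono_null hsub2 (measure_iUnion_null hB)

lemma nu_lower (m : ℕ) (hm : 1 < m) (s : ℕ → ℝ) (hstop : ∀ j, m ≤ j → s j = 0)
    (μs : Measure (ℕ → ℕ))
    (hcyl : ∀ (n : ℕ) (β : ℕ → ℕ),
      μs {ξ | ∀ i ≤ n, ξ i = β i} = ∏ i ∈ Finset.range (n + 1), ENNReal.ofReal (s (β i)))
    {x : ℝ} (hx : x ∈ Set.Ico (0:ℝ) 1) (n : ℕ) :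
    ∏ i ∈ Finset.range (n+1), ENNReal.ofReal (s (if i < n then bDigit m i x else 0))
      ≤ (μs.map (phiMap m)) (basicInterval m n x) := by
  set β : ℕ → ℕ := fun i => if i < n then bDigit m i x else 0 with hβ
  have hmeas : MeasurableSet (basicInterval m n x) := by
    rw [basicInterval_eq m hm hx n]; exact measurableSet_Ico
  rw [Measure.map_apply (measurable_phiMap m) hmeas]
  have hsub : {ξ : ℕ → ℕ | ∀ i ≤ n, ξ i = β i} \ {ξ | ∃ i, m ≤ ξ i}
      ⊆ phiMap m ⁻¹' (basicInterval m n x) := by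
    rintro ξ ⟨h1, h2⟩
    simp only [Set.mem_setOf_eq, not_exists, not_le] at h2
    have hpre : ∀ i < n, ξ i = bDigit m i x := by
      intro i hi
      rw [h1 i hi.le, hβ]
      simp [hi]
    have hn0 : ξ n = 0 := by
      rw [h1 n le_rfl, hβ]
      simp
    rw [Set.mem_preimage, basicInterval_eq m hm hx n]
    exact phi_mem_Ico m hm hx n h2 hpre hn0
  calc ∏ i ∈ Finset.range (n+1), ENNReal.ofReal (s (β i))
      = μs {ξ | ∀ i ≤ n, ξ i = β i} := (hcyl n β).symm
    _ = μs ({ξ : ℕ → ℕ | ∀ i ≤ n, ξ i = β i} \ {ξ | ∃ i, m ≤ ξ i}) :=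
        (measure_diff_null (bad_null m s hstop μs hcyl)).symm
    _ ≤ μs (phiMap m ⁻¹' (basicInterval m n x)) := measure_mono hsub

lemma cover_zero (m : ℕ) (hm : 1 < m) {ν : Measure ℝ} (hν : IsProbabilityMeasure ν)
    {hE ε d : ℝ} (hε : 0 < ε) (hd0 : 0 < d) (hlt : hE + ε < d * Real.log m) (N : ℕ)
    {A : Set ℝ} (hA : A ⊆ Set.Ico (0:ℝ) 1)
    (hAprop : ∀ x ∈ A, ∀ n, N ≤ n →
      ENNReal.ofReal (Real.exp (-(n:ℝ)*(hE+ε))) ≤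
        ν (Set.Ico ((⌊x * (m:ℝ)^n⌋₊ : ℝ)/(m:ℝ)^n) (((⌊x * (m:ℝ)^n⌋₊:ℝ)+1)/(m:ℝ)^n))) :
    μH[d] A = 0 := by
  classical
  have hm1 : (1:ℝ) < m := by exact_mod_cast hm
  have hm0 : (0:ℝ) < m := by linarith
  set F : ℕ → Finset ℕ := fun n => (Finset.range (m^n)).filter
      (fun k => (Set.Ico ((k:ℝ)/(m:ℝ)^n) (((k:ℝ)+1)/(m:ℝ)^n) ∩ A).Nonempty) with hF
  set t : ℕ → ℕ → Set ℝ := fun n k =>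
      if k ∈ F n then Set.Ico ((k:ℝ)/(m:ℝ)^n) (((k:ℝ)+1)/(m:ℝ)^n) else ∅ with ht
  have hr0 : ENNReal.ofReal (1/(m:ℝ)) < 1 := by
    rw [ENNReal.ofReal_lt_one, div_lt_one hm0]; exact hm1
  have hdiam : ∀ n k, Metric.ediam (t n k) ≤ (ENNReal.ofReal (1/(m:ℝ)))^n := by
    intro n k
    rw [ht]; dsimp only
    split_ifs
    · rw [Real.ediam_Ico, ← ENNReal.ofReal_pow (by positivity)]
      apply ENNReal.ofReal_le_ofReal
      have heq : ((k:ℝ)+1)/(m:ℝ)^n - (k:ℝ)/(m:ℝ)^n = 1/(m:ℝ)^n := by ring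
      rw [heq, div_pow, one_pow]
    · simp
  have hcover : ∀ n, A ⊆ ⋃ k : ℕ, t n k := by
    intro n x hx
    have hx01 := hA hx
    have hk := floor_lt_pow m n hm hx01
    have hmem : x ∈ Set.Ico ((⌊x*(m:ℝ)^n⌋₊:ℝ)/(m:ℝ)^n) (((⌊x*(m:ℝ)^n⌋₊:ℝ)+1)/(m:ℝ)^n) :=
      (mem_Ico_iff_floor m n hm hk).mpr ⟨hx01, rfl⟩
    refine Set.mem_iUnion.mpr ⟨⌊x*(m:ℝ)^n⌋₊, ?_⟩
    rw [ht]; dsimp only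
    rw [if_pos (Finset.mem_filter.mpr ⟨Finset.mem_range.mpr hk, ⟨x, hmem, hx⟩⟩)]
    exact hmem
  have hcard : ∀ n, N ≤ n →
      ((F n).card : ℝ≥0∞) * ENNReal.ofReal (Real.exp (-(n:ℝ)*(hE+ε))) ≤ 1 := by
    intro n hn
    have hdisj : (↑(F n) : Set ℕ).PairwiseDisjoint
        (fun k : ℕ => Set.Ico ((k:ℝ)/(m:ℝ)^n) (((k:ℝ)+1)/(m:ℝ)^n)) := by
      intro a _ b _ hab
      have key : ∀ u v : ℕ, u < v → Disjoint (Set.Ico ((u:ℝ)/(m:ℝ)^n) (((u:ℝ)+1)/(m:ℝ)^n))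
          (Set.Ico ((v:ℝ)/(m:ℝ)^n) (((v:ℝ)+1)/(m:ℝ)^n)) := by
        intro u v huv
        apply Set.Ico_disjoint_Ico.mpr
        have hp : (0:ℝ) < (m:ℝ)^n := pow_pos hm0 n
        have huv' : (u:ℝ)+1 ≤ (v:ℝ) := by exact_mod_cast huv
        have h1 : ((u:ℝ)+1)/(m:ℝ)^n ≤ (v:ℝ)/(m:ℝ)^n := by gcongr
        exact le_trans (min_le_left _ _) (le_trans h1 (le_max_right _ _))
      rcases hab.lt_or_gt with hlt | hlt
      · exact key a b hlt
      · exact (key b a hlt).symm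
    have hsum : ∑ k ∈ F n, ν (Set.Ico ((k:ℝ)/(m:ℝ)^n) (((k:ℝ)+1)/(m:ℝ)^n)) ≤ 1 := by
      rw [← measure_biUnion_finset hdisj (fun _ _ => measurableSet_Ico)]
      exact prob_le_one
    have hlow : ∀ k ∈ F n, ENNReal.ofReal (Real.exp (-(n:ℝ)*(hE+ε)))
        ≤ ν (Set.Ico ((k:ℝ)/(m:ℝ)^n) (((k:ℝ)+1)/(m:ℝ)^n)) := by
      intro k hk
      obtain ⟨x, hx1, hx2⟩ := (Finset.mem_filter.mp hk).2
      have hkm : k < m^n := Finset.mem_range.mp (Finset.mem_filter.mp hk).1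
      have hfl : ⌊x * (m:ℝ)^n⌋₊ = k := ((mem_Ico_iff_floor m n hm hkm).mp hx1).2
      have := hAprop x hx2 n hn
      rwa [hfl] at this
    calc ((F n).card : ℝ≥0∞) * ENNReal.ofReal (Real.exp (-(n:ℝ)*(hE+ε)))
        = ∑ _k ∈ F n, ENNReal.ofReal (Real.exp (-(n:ℝ)*(hE+ε))) := by
          rw [Finset.sum_const, nsmul_eq_mul]
      _ ≤ ∑ k ∈ F n, ν (Set.Ico ((k:ℝ)/(m:ℝ)^n) (((k:ℝ)+1)/(m:ℝ)^n)) := Finset.sum_le_sum hlow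
      _ ≤ 1 := hsum
  have hmain := Measure.hausdorffMeasure_le_liminf_tsum (ι := fun _ : ℕ => ℕ) d A
      (fun n => (ENNReal.ofReal (1/(m:ℝ)))^n)
      (ENNReal.tendsto_pow_atTop_nhds_zero_of_lt_one hr0) t
      (Eventually.of_forall (fun n => hdiam n)) (Eventually.of_forall hcover)
  have hev : ∀ᶠ n in atTop, (∑' k, Metric.ediam (t n k) ^ d)
      ≤ ENNReal.ofReal (Real.exp (-(n:ℝ) * (d * Real.log m - (hE+ε)))) := by
    filter_upwards [eventually_ge_atTop N] with n hn
    have hzero : ∀ k ∉ F n, Metric.ediam (t n k) ^ d = 0 := by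
      intro k hk
      rw [ht]; dsimp only; rw [if_neg hk]
      rw [Metric.ediam_empty]
      exact ENNReal.zero_rpow_of_pos hd0
    rw [tsum_eq_sum hzero]
    have hterm : ∀ k ∈ F n, Metric.ediam (t n k) ^ d
        ≤ ENNReal.ofReal ((1/(m:ℝ)^n) ^ d) := by
      intro k hk
      apply le_trans (ENNReal.rpow_le_rpow (hdiam n k) hd0.le)
      rw [← ENNReal.ofReal_pow (by positivity), ENNReal.ofReal_rpow_of_pos (by positivity)]
      apply le_of_eq; congr 2
      rw [div_pow, one_pow]
    have ha : ENNReal.ofReal (Real.exp (-(n:ℝ)*(hE+ε)))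
        = (ENNReal.ofReal (Real.exp ((n:ℝ)*(hE+ε))))⁻¹ := by
      rw [← ENNReal.ofReal_inv_of_pos (Real.exp_pos _), ← Real.exp_neg]
      ring_nf
    calc ∑ k ∈ F n, Metric.ediam (t n k) ^ d
        ≤ ∑ _k ∈ F n, ENNReal.ofReal ((1/(m:ℝ)^n) ^ d) := Finset.sum_le_sum hterm
      _ = ((F n).card : ℝ≥0∞) * ENNReal.ofReal ((1/(m:ℝ)^n) ^ d) := by
          rw [Finset.sum_const, nsmul_eq_mul]
      _ ≤ ENNReal.ofReal (Real.exp ((n:ℝ)*(hE+ε))) * ENNReal.ofReal ((1/(m:ℝ)^n) ^ d) := by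
          apply mul_le_mul_left
          have h1 := hcard n hn
          rw [ha] at h1
          calc ((F n).card : ℝ≥0∞)
              ≤ (ENNReal.ofReal (Real.exp ((n:ℝ)*(hE+ε))))⁻¹⁻¹ :=
                ENNReal.le_inv_iff_mul_le.mpr h1
            _ = _ := inv_inv _
      _ = ENNReal.ofReal (Real.exp ((n:ℝ)*(hE+ε)) * (1/(m:ℝ)^n)^d) :=
          (ENNReal.ofReal_mul (Real.exp_pos _).le).symm
      _ = ENNReal.ofReal (Real.exp (-(n:ℝ) * (d * Real.log m - (hE+ε)))) := by
          congr 1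
          rw [Real.rpow_def_of_pos (by positivity), ← Real.exp_add]
          congr 1
          rw [Real.log_div one_ne_zero (by positivity), Real.log_one, Real.log_pow]
          push_cast; ring
  have htend : Tendsto (fun n : ℕ =>
      ENNReal.ofReal (Real.exp (-(n:ℝ) * (d * Real.log m - (hE+ε))))) atTop (𝓝 0) := by
    rw [← ENNReal.ofReal_zero]
    apply ENNReal.tendsto_ofReal
    apply Real.tendsto_exp_atBot.comp
    have hδ : 0 < d * Real.log m - (hE+ε) := by linarith
    have h2 : Tendsto (fun n : ℕ => (n:ℝ) * (d * Real.log m - (hE+ε))) atTop atTop :=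
      Tendsto.atTop_mul_const hδ tendsto_natCast_atTop_atTop
    have h3 := tendsto_neg_atTop_atBot.comp h2
    apply h3.congr
    intro n
    show -((n:ℝ) * (d * Real.log m - (hE+ε))) = -(n:ℝ) * (d * Real.log m - (hE+ε))
    ring
  refine le_antisymm ?_ (by positivity)
  refine hmain.trans ?_
  calc liminf (fun n => ∑' k, Metric.ediam (t n k) ^ d) atTop
      ≤ liminf (fun n : ℕ =>
          ENNReal.ofReal (Real.exp (-(n:ℝ) * (d * Real.log m - (hE+ε))))) atTop :=
        liminf_le_liminf hev
    _ = 0 := htend.liminf_eq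

/-- Billingsley-type upper bound (4.13): if `s = (s_0,…,s_{m−1})` is a probability vector
with all entries positive, `ν = φμ_s` the pushforward of the Bernoulli measure `μ_s`, and
`h = −Σ_j s_j ln s_j`, then
`W = {x ∈ (0,1) : limsup_n (−(1/n) ln ν(I_n(x))) ≤ h}` has Hausdorff dimension
`HD(W) ≤ h / ln m`. -/
theorem hausdorff_dim_upper_bound (m : ℕ) (hm : 1 < m)
    (s : ℕ → ℝ) (hspos : ∀ j < m, 0 < s j) (hssum : ∑ j ∈ Finset.range m, s j = 1)
    (hstop : ∀ j, m ≤ j → s j = 0)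
    (μs : Measure (ℕ → ℕ)) (hprob : IsProbabilityMeasure μs)
    (hcyl : ∀ (n : ℕ) (β : ℕ → ℕ),
      μs {ξ | ∀ i ≤ n, ξ i = β i} = ∏ i ∈ Finset.range (n + 1), ENNReal.ofReal (s (β i))) :
    dimH {x ∈ Set.Ioo (0 : ℝ) 1 |
        Filter.limsup (fun n : ℕ =>
          -((1 : ℝ) / n) * Real.log ((μs.map (phiMap m) (basicInterval m n x)).toReal))
          atTop ≤ -∑ j ∈ Finset.range m, s j * Real.log (s j)} ≤
      ENNReal.ofReal ((-∑ j ∈ Finset.range m, s j * Real.log (s j)) / Real.log m) := by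
  have hm1 : (1:ℝ) < m := by exact_mod_cast hm
  have hm0 : (0:ℝ) < m := by linarith
  set h := -∑ j ∈ Finset.range m, s j * Real.log (s j) with hh
  set L := Real.log m with hL
  have hL0 : 0 < L := Real.log_pos hm1
  set ν := μs.map (phiMap m) with hν
  have hνprob : IsProbabilityMeasure ν :=
    Measure.isProbabilityMeasure_map (measurable_phiMap m).aemeasurable
  have hsle1 : ∀ j < m, s j ≤ 1 := by
    intro j hj
    rw [← hssum]
    exact Finset.single_le_sum (fun i hi => (hspos i (Finset.mem_range.mp hi)).le)
      (Finset.mem_range.mpr hj)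
  have hhnn : 0 ≤ h := by
    rw [hh, neg_nonneg]
    apply Finset.sum_nonpos
    intro j hj
    have hj' := Finset.mem_range.mp hj
    exact mul_nonpos_of_nonneg_of_nonpos (hspos j hj').le
      (Real.log_nonpos (hspos j hj').le (hsle1 j hj'))
  obtain ⟨c, hcm, hcmin⟩ := Finset.exists_min_image (Finset.range m) s
    ⟨0, Finset.mem_range.mpr (by omega)⟩
  set cv := s c with hcv
  have hc0 : 0 < cv := hspos c (Finset.mem_range.mp hcm)
  have hc1 : cv ≤ 1 := hsle1 c (Finset.mem_range.mp hcm)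
  have hcle : ∀ j < m, cv ≤ s j := fun j hj => hcmin j (Finset.mem_range.mpr hj)
  have hνlow : ∀ x ∈ Set.Ico (0:ℝ) 1, ∀ n : ℕ,
      ENNReal.ofReal (cv^(n+1)) ≤ ν (basicInterval m n x) := by
    intro x hx n
    refine le_trans ?_ (nu_lower m hm s hstop μs hcyl hx n)
    rw [ENNReal.ofReal_pow hc0.le]
    rw [show (ENNReal.ofReal cv)^(n+1) = ∏ _i ∈ Finset.range (n+1), ENNReal.ofReal cv by
      rw [Finset.prod_const, Finset.card_range]]
    apply Finset.prod_le_prod'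
    intro i _
    apply ENNReal.ofReal_le_ofReal
    by_cases hi : i < n
    · simpa [hi] using hcle _ (bDigit_lt m hm i x)
    · simpa [hi] using hcle 0 (by omega)
  have hνne : ∀ X : Set ℝ, ν X ≠ ⊤ := fun X => measure_ne_top ν X
  have htR : ∀ x ∈ Set.Ico (0:ℝ) 1, ∀ n : ℕ,
      cv^(n+1) ≤ (ν (basicInterval m n x)).toReal := by
    intro x hx n
    calc cv^(n+1) = (ENNReal.ofReal (cv^(n+1))).toReal :=
          (ENNReal.toReal_ofReal (by positivity)).symm
      _ ≤ _ := ENNReal.toReal_mono (hνne _) (hνlow x hx n)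
  have hub : ∀ x ∈ Set.Ico (0:ℝ) 1, ∀ n : ℕ,
      -((1:ℝ)/n) * Real.log ((ν (basicInterval m n x)).toReal)
        ≤ max 0 (2 * (-Real.log cv)) := by
    intro x hx n
    rcases Nat.eq_zero_or_pos n with rfl | hn
    · simp
    · have hn1 : (1:ℝ) ≤ n := by exact_mod_cast hn
      have hn0 : (0:ℝ) < n := by linarith
      have hlogc : Real.log cv ≤ 0 := Real.log_nonpos hc0.le hc1
      have hlog : ((n:ℝ)+1) * Real.log cv
          ≤ Real.log ((ν (basicInterval m n x)).toReal) := by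
        calc ((n:ℝ)+1) * Real.log cv = Real.log (cv^(n+1)) := by
              rw [Real.log_pow]; push_cast; ring
          _ ≤ _ := Real.log_le_log (by positivity) (htR x hx n)
      have hstep : -((1:ℝ)/n) * Real.log ((ν (basicInterval m n x)).toReal)
          ≤ -((1:ℝ)/n) * (((n:ℝ)+1) * Real.log cv) := by
        apply mul_le_mul_of_nonpos_left hlog
        simp only [neg_nonpos]
        positivity
      refine le_trans hstep (le_trans ?_ (le_max_right _ _))
      rw [show -((1:ℝ)/n) * (((n:ℝ)+1) * Real.log cv)
          = (((n:ℝ)+1)/n) * (-Real.log cv) by ring]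
      apply mul_le_mul_of_nonneg_right ?_ (by linarith)
      rw [div_le_iff₀ hn0]; linarith
  apply dimH_le
  intro d' hd'
  by_contra hcon
  push_neg at hcon
  have hdL : h / L < (d' : ℝ) := by
    rw [← ENNReal.ofReal_coe_nnreal] at hcon
    exact (ENNReal.ofReal_lt_ofReal_iff_of_nonneg (div_nonneg hhnn hL0.le)).mp hcon
  have hd0 : (0:ℝ) < (d' : ℝ) := lt_of_le_of_lt (div_nonneg hhnn hL0.le) hdL
  have hdh : h < (d' : ℝ) * L := (div_lt_iff₀ hL0).mp hdL
  set ε : ℝ := ((d' : ℝ) * L - h)/2 with hε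
  have hε0 : 0 < ε := by rw [hε]; linarith
  have hlt2 : h + ε < (d' : ℝ) * L := by rw [hε]; linarith
  set A : ℕ → Set ℝ := fun N => {x ∈ Set.Ioo (0:ℝ) 1 | ∀ n, N ≤ n →
      ENNReal.ofReal (Real.exp (-(n:ℝ)*(h+ε))) ≤ ν (basicInterval m n x)} with hA
  have hWA : {x ∈ Set.Ioo (0 : ℝ) 1 |
      Filter.limsup (fun n : ℕ =>
        -((1 : ℝ) / n) * Real.log ((ν (basicInterval m n x)).toReal)) atTop ≤ h}
      ⊆ ⋃ N, A N := by
    rintro x ⟨hx1, hx2⟩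
    have hxI : x ∈ Set.Ico (0:ℝ) 1 := ⟨hx1.1.le, hx1.2⟩
    have hbdd : IsBoundedUnder (· ≤ ·) atTop (fun n : ℕ =>
        -((1 : ℝ) / n) * Real.log ((ν (basicInterval m n x)).toReal)) :=
      isBoundedUnder_of ⟨max 0 (2 * (-Real.log cv)), fun n => hub x hxI n⟩
    have hev := eventually_lt_of_limsup_lt
      (lt_of_le_of_lt hx2 (by linarith : h < h + ε)) hbdd
    obtain ⟨N0, hN0⟩ := eventually_atTop.mp hev
    refine Set.mem_iUnion.mpr ⟨N0 + 1, hx1, fun n hn => ?_⟩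
    have hn1 : (1:ℝ) ≤ n := by exact_mod_cast (by omega : 1 ≤ n)
    have hn0 : (0:ℝ) < n := by linarith
    have husm := hN0 n (by omega)
    have ht0 : 0 < (ν (basicInterval m n x)).toReal :=
      lt_of_lt_of_le (by positivity) (htR x hxI n)
    have hq : -(n:ℝ)*(h+ε) ≤ Real.log ((ν (basicInterval m n x)).toReal) := by
      set q := Real.log ((ν (basicInterval m n x)).toReal) with hqd
      have heq : (n:ℝ) * (-(1/(n:ℝ)) * q) = -q := by field_simp
      nlinarith [mul_lt_mul_of_pos_left husm hn0]
    calc ENNReal.ofReal (Real.exp (-(n:ℝ)*(h+ε)))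
        ≤ ENNReal.ofReal ((ν (basicInterval m n x)).toReal) := by
          apply ENNReal.ofReal_le_ofReal
          rw [← Real.exp_log ht0]
          exact Real.exp_le_exp.mpr hq
      _ = ν (basicInterval m n x) := ENNReal.ofReal_toReal (hνne _)
  have hzero : μH[(d' : ℝ)] {x ∈ Set.Ioo (0 : ℝ) 1 |
      Filter.limsup (fun n : ℕ =>
        -((1 : ℝ) / n) * Real.log ((ν (basicInterval m n x)).toReal)) atTop ≤ h} = 0 := by
    apply measure_mono_null hWA
    apply measure_iUnion_null
    intro N
    apply cover_zero m hm hνprob hε0 hd0 hlt2 N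
      (fun x hx => (⟨hx.1.1.le, hx.1.2⟩ : x ∈ Set.Ico (0:ℝ) 1))
    intro x hx n hn
    have hxI : x ∈ Set.Ico (0:ℝ) 1 := ⟨hx.1.1.le, hx.1.2⟩
    rw [← basicInterval_eq m hm hxI n]
    exact hx.2 n hn
  rw [hzero] at hd'
  exact ENNReal.zero_ne_top hd'
end

section
/- Suppose q_1(k) = k for all k, and let r̄ = (r_1, r_2, …) be a probability vector on the positive integers with p_α = Π_{i=1}^ℓ r_{α_i} for every α ∈ A_ℓ = {1,2,3,…}^ℓ. Then there exists an irrational z ∈ (0,1) with z ∈ U_p such that its continued fraction digits satisfy a_n(z) ≤ n for all n ≥ 1; in particular U_p ≠ ∅. (Construction in the proof of Proposition 2.9.) -/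
open MeasureTheory Filter
open scoped ENNReal

/-- The Gauss map `T x = {1/x}`. -/
noncomputable def gaussMap (x : ℝ) : ℝ := Int.fract x⁻¹

/-- The `n`-th continued fraction digit `a_n(x) = ⌊1/(T^n x)⌋`. -/
noncomputable def cfDigit (n : ℕ) (x : ℝ) : ℕ := ⌊(gaussMap^[n] x)⁻¹⌋₊

/-- `N_α(x,n)`: the number of `k ∈ {1,…,n}` such that
`(a_{q_1(k)}(x),…,a_{q_ℓ(k)}(x)) = α`. -/
noncomputable def NwordCF {ℓ : ℕ} (q : Fin ℓ → ℕ → ℕ) (α : Fin ℓ → ℕ)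
    (x : ℝ) (n : ℕ) : ℕ :=
  ((Finset.Icc 1 n).filter fun k => ∀ i, cfDigit (q i k) x = α i).card

/-- The set `U_p` of irrational `x ∈ (0,1)` such that `N_α(x,n)/n → p_α` for every word
`α ∈ {1,2,3,…}^ℓ`. -/
noncomputable def UsetCF {ℓ : ℕ} (q : Fin ℓ → ℕ → ℕ) (p : (Fin ℓ → ℕ) → ℝ) : Set ℝ :=
  {x ∈ Set.Ioo (0 : ℝ) 1 | Irrational x ∧ ∀ α : Fin ℓ → ℕ, (∀ i, 1 ≤ α i) →
    Tendsto (fun n : ℕ => (NwordCF q α x n : ℝ) / n) atTop (nhds (p α))}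

namespace CFAux

/-- shift of a digit sequence -/
def shf (a : ℕ → ℕ) : ℕ → ℕ := fun n => a (n + 1)

/-- finite continued fraction approximants -/
noncomputable def approx : (ℕ → ℕ) → ℕ → ℝ
  | _, 0 => 0
  | a, (N+1) => ((a 0 : ℝ) + approx (shf a) N)⁻¹

def OK (a : ℕ → ℕ) : Prop := ∀ n, 1 ≤ a n

lemma OK.shf {a : ℕ → ℕ} (h : OK a) : OK (shf a) := fun n => h (n+1)

lemma OK.one_le_cast {a : ℕ → ℕ} (h : OK a) (n : ℕ) : (1 : ℝ) ≤ (a n : ℝ) := by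
  exact_mod_cast h n

lemma approx_mem : ∀ (N : ℕ) (a : ℕ → ℕ), OK a → approx a N ∈ Set.Icc (0:ℝ) 1 := by
  intro N
  induction N with
  | zero => intro a _; simp [approx]
  | succ N ih =>
    intro a ha
    obtain ⟨h0, h1⟩ := ih (shf a) ha.shf
    have ha0 : (1:ℝ) ≤ (a 0 : ℝ) := ha.one_le_cast 0
    have hpos : (0:ℝ) < (a 0 : ℝ) + approx (shf a) N := by linarith
    constructor
    · simp only [approx]; positivity
    · simp only [approx]
      rw [inv_le_one_iff₀]
      right; linarith

lemma step2 (b0 b1 s s' : ℝ) (hb0 : 1 ≤ b0) (hb1 : 1 ≤ b1) (hs : 0 ≤ s) (hs' : 0 ≤ s') :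
    |(b0 + (b1 + s)⁻¹)⁻¹ - (b0 + (b1 + s')⁻¹)⁻¹| ≤ |s - s'| / 4 := by
  have hp : (0:ℝ) < b1 + s := by linarith
  have hp' : (0:ℝ) < b1 + s' := by linarith
  have hD : (0:ℝ) < b0 + (b1 + s)⁻¹ := by positivity
  have hD' : (0:ℝ) < b0 + (b1 + s')⁻¹ := by positivity
  have key : (b0 + (b1 + s)⁻¹)⁻¹ - (b0 + (b1 + s')⁻¹)⁻¹
      = (s - s') / (((b1 + s) * (b0 + (b1 + s)⁻¹)) * ((b1 + s') * (b0 + (b1 + s')⁻¹))) := by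
    field_simp
    ring
  have h2 : (2:ℝ) ≤ (b1 + s) * (b0 + (b1 + s)⁻¹) := by
    have : (b1 + s) * (b0 + (b1 + s)⁻¹) = (b1 + s) * b0 + 1 := by
      field_simp
    rw [this]; nlinarith
  have h2' : (2:ℝ) ≤ (b1 + s') * (b0 + (b1 + s')⁻¹) := by
    have : (b1 + s') * (b0 + (b1 + s')⁻¹) = (b1 + s') * b0 + 1 := by
      field_simp
    rw [this]; nlinarith
  rw [key, abs_div]
  have habs : |((b1 + s) * (b0 + (b1 + s)⁻¹)) * ((b1 + s') * (b0 + (b1 + s')⁻¹))|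
      = ((b1 + s) * (b0 + (b1 + s)⁻¹)) * ((b1 + s') * (b0 + (b1 + s')⁻¹)) := by
    rw [abs_of_pos]; positivity
  rw [habs]
  have h4 : (4:ℝ) ≤ ((b1 + s) * (b0 + (b1 + s)⁻¹)) * ((b1 + s') * (b0 + (b1 + s')⁻¹)) := by
    nlinarith
  gcongr

lemma approx_succ (a : ℕ → ℕ) (N : ℕ) :
    approx a (N+1) = ((a 0 : ℝ) + approx (shf a) N)⁻¹ := rfl

lemma approx_dist : ∀ (K : ℕ) (a : ℕ → ℕ), OK a → ∀ M M', 2*K ≤ M → 2*K ≤ M' →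
    |approx a M - approx a M'| ≤ (1/4 : ℝ)^K := by
  intro K
  induction K with
  | zero =>
    intro a ha M M' _ _
    obtain ⟨h0, h1⟩ := approx_mem M a ha
    obtain ⟨h0', h1'⟩ := approx_mem M' a ha
    rw [pow_zero]
    rw [abs_le]; constructor <;> linarith
  | succ K ih =>
    intro a ha M M' hM hM'
    obtain ⟨m, rfl⟩ : ∃ m, M = m + 2 := ⟨M - 2, by omega⟩
    obtain ⟨m', rfl⟩ : ∃ m', M' = m' + 2 := ⟨M' - 2, by omega⟩
    have hs := approx_mem m (shf (shf a)) ha.shf.shf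
    have hs' := approx_mem m' (shf (shf a)) ha.shf.shf
    have key := step2 (a 0 : ℝ) (a 1 : ℝ) (approx (shf (shf a)) m) (approx (shf (shf a)) m')
      (ha.one_le_cast 0) (ha.one_le_cast 1) hs.1 hs'.1
    have hih := ih (shf (shf a)) ha.shf.shf m m' (by omega) (by omega)
    have e1 : approx a (m+2) = ((a 0 : ℝ) + ((a 1 : ℝ) + approx (shf (shf a)) m)⁻¹)⁻¹ := rfl
    have e2 : approx a (m'+2) = ((a 0 : ℝ) + ((a 1 : ℝ) + approx (shf (shf a)) m')⁻¹)⁻¹ := rfl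
    rw [e1, e2]
    calc _ ≤ |approx (shf (shf a)) m - approx (shf (shf a)) m'| / 4 := key
    _ ≤ (1/4:ℝ)^K / 4 := by linarith
    _ = (1/4:ℝ)^(K+1) := by ring

lemma cauchy (a : ℕ → ℕ) (ha : OK a) : CauchySeq (approx a) := by
  rw [Metric.cauchySeq_iff']
  intro ε hε
  obtain ⟨K, hK⟩ := exists_pow_lt_of_lt_one hε (by norm_num : (1/4:ℝ) < 1)
  refine ⟨2*K, fun n hn => ?_⟩
  have := approx_dist K a ha n (2*K) hn le_rfl
  calc dist (approx a n) (approx a (2*K)) = |approx a n - approx a (2*K)| := rfl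
  _ ≤ (1/4:ℝ)^K := this
  _ < ε := hK

noncomputable def val (a : ℕ → ℕ) : ℝ := limUnder atTop (approx a)

lemma tendsto_val (a : ℕ → ℕ) (ha : OK a) : Tendsto (approx a) atTop (nhds (val a)) :=
  (cauchy a ha).tendsto_limUnder

lemma val_mem (a : ℕ → ℕ) (ha : OK a) : val a ∈ Set.Icc (0:ℝ) 1 :=
  isClosed_Icc.mem_of_tendsto (tendsto_val a ha)
    (Filter.Eventually.of_forall fun N => approx_mem N a ha)

lemma val_rec (a : ℕ → ℕ) (ha : OK a) : val a = ((a 0 : ℝ) + val (shf a))⁻¹ := by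
  have h1 : Tendsto (fun N => approx a (N+1)) atTop (nhds (val a)) :=
    (tendsto_val a ha).comp (tendsto_add_atTop_nat 1)
  have hne : (a 0 : ℝ) + val (shf a) ≠ 0 := by
    have := (val_mem (shf a) ha.shf).1
    have := ha.one_le_cast 0
    linarith
  have h2 : Tendsto (fun N => approx a (N+1)) atTop
      (nhds (((a 0 : ℝ) + val (shf a))⁻¹)) := by
    simp only [approx_succ]
    exact (((tendsto_val (shf a) ha.shf).const_add _).inv₀ hne)
  exact tendsto_nhds_unique h1 h2

lemma val_pos (a : ℕ → ℕ) (ha : OK a) : 0 < val a := by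
  rw [val_rec a ha]
  have := (val_mem (shf a) ha.shf).1
  have := ha.one_le_cast 0
  positivity

lemma val_lt_one (a : ℕ → ℕ) (ha : OK a) : val a < 1 := by
  rw [val_rec a ha]
  have h1 := val_pos (shf a) ha.shf
  have h2 := ha.one_le_cast 0
  rw [inv_lt_one_iff₀]
  right; linarith

lemma val_inv (a : ℕ → ℕ) (ha : OK a) : (val a)⁻¹ = (a 0 : ℝ) + val (shf a) := by
  rw [val_rec a ha, inv_inv]

lemma gauss_val (a : ℕ → ℕ) (ha : OK a) : gaussMap (val a) = val (shf a) := by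
  rw [gaussMap, val_inv a ha]
  have h1 := val_pos (shf a) ha.shf
  have h2 := val_lt_one (shf a) ha.shf
  rw [show ((a 0 : ℝ)) = ((a 0 : ℤ) : ℝ) by push_cast; ring, Int.fract_intCast_add]
  exact Int.fract_eq_self.2 ⟨le_of_lt h1, h2⟩

/-- iterated shift -/
def shfIter (a : ℕ → ℕ) : ℕ → (ℕ → ℕ)
  | 0 => a
  | (n+1) => shf (shfIter a n)

lemma shfIter_OK (a : ℕ → ℕ) (ha : OK a) : ∀ n, OK (shfIter a n)
  | 0 => ha
  | (n+1) => (shfIter_OK a ha n).shf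

lemma shfIter_apply (a : ℕ → ℕ) : ∀ n m, shfIter a n m = a (m + n)
  | 0, m => by simp [shfIter]
  | (n+1), m => by
      show shf (shfIter a n) m = _
      rw [shf, shfIter_apply a n (m+1)]
      congr 1; omega

lemma gauss_iter (a : ℕ → ℕ) (ha : OK a) : ∀ n, gaussMap^[n] (val a) = val (shfIter a n)
  | 0 => rfl
  | (n+1) => by
      rw [Function.iterate_succ_apply', gauss_iter a ha n,
        gauss_val _ (shfIter_OK a ha n)]
      rfl

lemma cfDigit_val (a : ℕ → ℕ) (ha : OK a) (n : ℕ) : cfDigit n (val a) = a n := by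
  rw [cfDigit, gauss_iter a ha n, val_inv _ (shfIter_OK a ha n)]
  have h1 := val_pos (shf (shfIter a n)) (shfIter_OK a ha n).shf
  have h2 := val_lt_one (shf (shfIter a n)) (shfIter_OK a ha n).shf
  rw [shfIter_apply a n 0]
  have : (0:ℕ) + n = n := by omega
  rw [this]
  rw [Nat.floor_eq_iff (by positivity)]
  constructor
  · linarith
  · push_cast; linarith

lemma gauss_cast (x : ℚ) : gaussMap (x : ℝ) = ((Int.fract x⁻¹ : ℚ) : ℝ) := by
  rw [gaussMap, ← Rat.cast_inv, Int.fract, Int.fract, Rat.floor_cast]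
  push_cast
  ring

lemma rat_escape : ∀ (p : ℕ) (x : ℚ), 0 < x → x < 1 → x.num.natAbs ≤ p →
    ∃ n, gaussMap^[n] (x : ℝ) ∉ Set.Ioo (0:ℝ) 1 := by
  intro p
  induction p using Nat.strong_induction_on with
  | _ p ih =>
    intro x hx0 hx1 hxp
    set y : ℚ := Int.fract x⁻¹ with hy
    have hg1 : gaussMap^[1] (x : ℝ) = (y : ℝ) := by
      rw [Function.iterate_one, gauss_cast]
    by_cases hy0 : y = 0
    · exact ⟨1, by rw [hg1, hy0]; simp⟩
    · have hynum : y.num.natAbs < x.num.natAbs := by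
        have hnum_pos : 0 < x.num := Rat.num_pos.2 hx0
        have hnumQ : ((x.num : ℚ)) ≠ 0 := by exact_mod_cast hnum_pos.ne'
        have hdenQ : (0:ℚ) < (x.den : ℚ) := by exact_mod_cast x.pos
        have hxinv : x⁻¹ = (x.den : ℚ) / (x.num : ℚ) := by
          conv_lhs => rw [← Rat.num_div_den x]
          rw [inv_div]
        have hyeq : y = (((x.den : ℤ) - ⌊x⁻¹⌋ * x.num : ℤ) : ℚ) / ((x.num : ℤ) : ℚ) := by
          rw [hy, Int.fract]
          push_cast
          rw [hxinv]
          field_simp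
        have hydvd : (y.den : ℤ) ∣ x.num := by
          rw [hyeq, ← Rat.divInt_eq_div]
          exact Rat.den_dvd _ _
        have hyden_le : (y.den : ℤ) ≤ x.num := Int.le_of_dvd hnum_pos hydvd
        have hy0' : 0 < y := lt_of_le_of_ne (Int.fract_nonneg _) (Ne.symm hy0)
        have hy1 : y < 1 := Int.fract_lt_one _
        have hynum_pos : 0 < y.num := Rat.num_pos.2 hy0'
        have hydenQ : (0:ℚ) < (y.den : ℚ) := by exact_mod_cast y.pos
        have hlt : (y.num : ℚ) < (y.den : ℚ) := by
          have := (div_lt_one hydenQ).1 (by rw [Rat.num_div_den y]; exact hy1)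
          linarith
        have h1 : y.num < (y.den : ℤ) := by exact_mod_cast hlt
        omega
      have hy0' : 0 < y := lt_of_le_of_ne (Int.fract_nonneg _) (Ne.symm hy0)
      have hy1 : y < 1 := Int.fract_lt_one _
      obtain ⟨n, hn⟩ := ih y.num.natAbs (by omega) y hy0' hy1 le_rfl
      refine ⟨n + 1, ?_⟩
      rw [show n + 1 = n + 1 from rfl, Function.iterate_add_apply, hg1]
      exact hn

theorem irrational_of_orbit (z : ℝ) (h : ∀ n, gaussMap^[n] z ∈ Set.Ioo (0:ℝ) 1) :
    Irrational z := by
  rw [Irrational]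
  rintro ⟨x, rfl⟩
  have h0 := h 0
  simp only [Function.iterate_zero, id] at h0
  have hx0 : 0 < x := by exact_mod_cast h0.1
  have hx1 : x < 1 := by exact_mod_cast h0.2
  obtain ⟨n, hn⟩ := rat_escape x.num.natAbs x hx0 hx1 le_rfl
  exact hn (h n)

end CFAux


open Filter

namespace FinProb

abbrev Omega (L : ℕ) := ∀ c : Fin L, Fin ((c : ℕ) + 1)

variable (w : ℕ → ℕ → ℝ)

noncomputable def W (L : ℕ) (x : Omega L) : ℝ := ∏ c, w c.val (x c).val

open scoped Classical in
noncomputable def P (L : ℕ) (φ : Omega L → Prop) : ℝ :=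
  ∑ x : Omega L, if φ x then W w L x else 0

lemma W_nonneg (hw0 : ∀ c u, 0 ≤ w c u) (L : ℕ) (x : Omega L) : 0 ≤ W w L x :=
  Finset.prod_nonneg fun c _ => hw0 _ _

lemma sum_W (L : ℕ) (hwsum : ∀ c, ∑ t : Fin (c+1), w c t.val = 1) :
    ∑ x : Omega L, W w L x = 1 := by
  classical
  have h := Finset.prod_univ_sum (fun c : Fin L => (Finset.univ : Finset (Fin ((c:ℕ)+1))))
      (fun c t => w c.val t.val)
  rw [Fintype.piFinset_univ] at h
  simp only [W]
  rw [← h]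
  exact Finset.prod_eq_one fun c _ => hwsum c.val

open scoped Classical in
lemma P_nonneg (hw0 : ∀ c u, 0 ≤ w c u) (L : ℕ) (φ : Omega L → Prop) : 0 ≤ P w L φ := by
  apply Finset.sum_nonneg
  intro x _
  split
  · exact W_nonneg w hw0 L x
  · exact le_refl 0

open scoped Classical in
lemma P_le (hw0 : ∀ c u, 0 ≤ w c u) (L : ℕ) (φ ψ : Omega L → Prop)
    (h : ∀ x, φ x → ψ x) : P w L φ ≤ P w L ψ := by
  apply Finset.sum_le_sum
  intro x _
  by_cases hx : φ x
  · rw [if_pos hx, if_pos (h x hx)]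
  · rw [if_neg hx]
    split
    · exact W_nonneg w hw0 L x
    · exact le_refl 0

open scoped Classical in
lemma P_union (hw0 : ∀ c u, 0 ≤ w c u) (L : ℕ) (φ ψ : Omega L → Prop) :
    P w L (fun x => φ x ∨ ψ x) ≤ P w L φ + P w L ψ := by
  rw [P, P, P, ← Finset.sum_add_distrib]
  apply Finset.sum_le_sum
  intro x _
  have hW := W_nonneg w hw0 L x
  by_cases h1 : φ x <;> by_cases h2 : ψ x <;>
    simp [h1, h2, hW] <;> linarith

open scoped Classical in
lemma exists_not_of_P_lt_one (L : ℕ)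
    (hwsum : ∀ c, ∑ t : Fin (c+1), w c t.val = 1)
    (φ : Omega L → Prop) (h : P w L φ < 1) : ∃ x, ¬ φ x := by
  by_contra hc
  push_neg at hc
  have : P w L φ = 1 := by
    rw [P, ← sum_W w L hwsum]
    exact Finset.sum_congr rfl fun x _ => if_pos (hc x)

  exact absurd (this ▸ h) (lt_irrefl 1)

lemma sum_single (c u : ℕ) (hwsupp : ∀ c u, c < u → w c u = 0) :
    ∑ t : Fin (c+1), (if u = (t : ℕ) then w c (t : ℕ) else 0) = w c u := by
  classical
  rw [Fin.sum_univ_eq_sum_range (fun j => if u = j then w c j else 0) (c+1)]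
  rw [Finset.sum_ite_eq]
  by_cases h : u ∈ Finset.range (c+1)
  · rw [if_pos h]
  · rw [if_neg h]
    rw [Finset.mem_range] at h
    exact (hwsupp c u (by omega)).symm

open scoped Classical in
lemma P_cyl {L : ℕ} {I : Type*} [Fintype I] [DecidableEq I] (f : I → Fin L)
    (hf : Function.Injective f) (v : I → ℕ)
    (hwsum : ∀ c, ∑ t : Fin (c+1), w c t.val = 1)
    (hwsupp : ∀ c u, c < u → w c u = 0) :
    P w L (fun x => ∀ i, ((x (f i)) : ℕ) = v i) = ∏ i, w (f i).val (v i) := by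
  set g : (c : Fin L) → Fin ((c:ℕ)+1) → ℝ :=
    fun c t => w c.val t.val * (if ∀ i, f i = c → v i = t.val then 1 else 0) with hg
  have hpt : ∀ x : Omega L,
      (if (∀ i, ((x (f i)) : ℕ) = v i) then W w L x else 0) = ∏ c, g c (x c) := by
    intro x
    by_cases h : ∀ i, ((x (f i)) : ℕ) = v i
    · rw [if_pos h, W]
      apply Finset.prod_congr rfl
      intro c _
      rw [hg]
      simp only
      rw [if_pos, mul_one]
      intro i hic
      subst hic
      exact (h i).symm
    · rw [if_neg h]
      push_neg at h
      obtain ⟨i, hi⟩ := h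
      symm
      apply Finset.prod_eq_zero (Finset.mem_univ (f i))
      rw [hg]
      simp only
      rw [if_neg, mul_zero]
      intro hall
      exact hi ((hall i rfl).symm)
  have hswap := Finset.prod_univ_sum (fun c : Fin L => (Finset.univ : Finset (Fin ((c:ℕ)+1)))) g
  rw [Fintype.piFinset_univ] at hswap
  have himg : ∀ c : Fin L, c ∉ Finset.image f Finset.univ → (∑ t, g c t) = 1 := by
    intro c hc
    have hgt : ∀ t : Fin ((c:ℕ)+1), g c t = w c.val t.val := by
      intro t
      rw [hg]
      simp only
      rw [if_pos, mul_one]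
      intro i hic
      exact absurd (Finset.mem_image.2 ⟨i, Finset.mem_univ i, hic⟩) hc
    rw [Finset.sum_congr rfl fun t _ => hgt t]
    exact hwsum c.val
  have hsingle : ∀ i, (∑ t, g (f i) t) = w (f i).val (v i) := by
    intro i
    have hgt : ∀ t : Fin (((f i):ℕ)+1), g (f i) t
        = (if v i = (t:ℕ) then w (f i).val (t:ℕ) else 0) := by
      intro t
      rw [hg]
      simp only
      by_cases hv : v i = (t:ℕ)
      · rw [if_pos, if_pos hv, mul_one]
        intro j hj
        rw [hf hj]
        exact hv
      · rw [if_neg, if_neg hv, mul_zero]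
        intro hall
        exact hv (hall i rfl)
    rw [Finset.sum_congr rfl fun t _ => hgt t]
    exact sum_single w _ _ hwsupp
  calc P w L (fun x => ∀ i, ((x (f i)) : ℕ) = v i)
      = ∑ x : Omega L, ∏ c, g c (x c) := by
        rw [P]
        refine Finset.sum_congr rfl fun x _ => ?_
        by_cases h : ∀ i, ((x (f i)) : ℕ) = v i
        · rw [if_pos h, ← hpt x, if_pos h]
        · rw [if_neg h, ← hpt x, if_neg h]
    _ = ∏ c : Fin L, ∑ t, g c t := hswap.symm
    _ = ∏ c ∈ Finset.image f Finset.univ, ∑ t, g c t :=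
        (Finset.prod_subset (Finset.subset_univ _) fun c _ hc => himg c hc).symm
    _ = ∏ i, ∑ t, g (f i) t := Finset.prod_image fun i _ j _ h => hf h
    _ = ∏ i, w (f i).val (v i) := Finset.prod_congr rfl fun i _ => hsingle i


open scoped Classical in
lemma chebyshev (L : ℕ) (K : Finset ℕ) (Y : ℕ → Omega L → ℝ) (e : ℕ → ℝ)
    (Bad : Finset (ℕ × ℕ)) (B : ℕ)
    (hw0 : ∀ c u, 0 ≤ w c u)
    (hwsum : ∀ c, ∑ t : Fin (c+1), w c t.val = 1)
    (hY01 : ∀ k x, Y k x = 0 ∨ Y k x = 1)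
    (he0 : ∀ k, 0 ≤ e k)
    (h1 : ∀ k ∈ K, ∑ x : Omega L, W w L x * Y k x = e k)
    (h2 : ∀ k ∈ K, ∀ k' ∈ K, (k, k') ∉ Bad →
        (∑ x : Omega L, W w L x * (Y k x * Y k' x)) = e k * e k')
    (hB : Bad.card ≤ B)
    (δ : ℝ) (hδ : 0 < δ) :
    P w L (fun x => δ ≤ |∑ k ∈ K, (Y k x - e k)|) ≤ B / δ^2 := by
  have hWsum := sum_W w L hwsum
  have hWnn : ∀ x : Omega L, 0 ≤ W w L x := W_nonneg w hw0 L
  set T : Omega L → ℝ := fun x => ∑ k ∈ K, (Y k x - e k) with hT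
  -- second moment bound
  have pair : ∀ k ∈ K, ∀ k' ∈ K,
      (∑ x : Omega L, W w L x * ((Y k x - e k) * (Y k' x - e k')))
      = (∑ x : Omega L, W w L x * (Y k x * Y k' x)) - e k * e k' := by
    intro k hk k' hk'
    have expand : ∀ x : Omega L, W w L x * ((Y k x - e k) * (Y k' x - e k'))
        = W w L x * (Y k x * Y k' x) - e k' * (W w L x * Y k x)
          - e k * (W w L x * Y k' x) + (e k * e k') * W w L x := by
      intro x; ring
    rw [Finset.sum_congr rfl fun x _ => expand x]
    rw [Finset.sum_add_distrib, Finset.sum_sub_distrib, Finset.sum_sub_distrib,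
      ← Finset.mul_sum, ← Finset.mul_sum, ← Finset.mul_sum, h1 k hk, h1 k' hk', hWsum]
    ring
  have pair_good : ∀ k ∈ K, ∀ k' ∈ K, (k, k') ∉ Bad →
      (∑ x : Omega L, W w L x * ((Y k x - e k) * (Y k' x - e k'))) = 0 := by
    intro k hk k' hk' hg
    rw [pair k hk k' hk', h2 k hk k' hk' hg]
    ring
  have pair_bad : ∀ k ∈ K, ∀ k' ∈ K,
      (∑ x : Omega L, W w L x * ((Y k x - e k) * (Y k' x - e k'))) ≤ 1 := by
    intro k hk k' hk'
    rw [pair k hk k' hk']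
    have hle : (∑ x : Omega L, W w L x * (Y k x * Y k' x)) ≤ 1 := by
      rw [← hWsum]
      apply Finset.sum_le_sum
      intro x _
      have h1x := hY01 k x
      have h2x := hY01 k' x
      have := hWnn x
      rcases h1x with h | h <;> rcases h2x with h' | h' <;> rw [h, h'] <;> nlinarith
    nlinarith [mul_nonneg (he0 k) (he0 k')]
  have secmom : (∑ x : Omega L, W w L x * (T x)^2) ≤ (B : ℝ) := by
    have expand2 : ∀ x : Omega L, W w L x * (T x)^2
        = ∑ k ∈ K, ∑ k' ∈ K, W w L x * ((Y k x - e k) * (Y k' x - e k')) := by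
      intro x
      rw [hT]
      simp only
      rw [sq, Finset.sum_mul_sum]
      rw [Finset.mul_sum]
      refine Finset.sum_congr rfl fun k _ => ?_
      rw [Finset.mul_sum]
    rw [Finset.sum_congr rfl fun x _ => expand2 x]
    rw [Finset.sum_comm]
    have swap2 : ∀ k ∈ K, (∑ x : Omega L, ∑ k' ∈ K, W w L x * ((Y k x - e k) * (Y k' x - e k')))
        = ∑ k' ∈ K, ∑ x : Omega L, W w L x * ((Y k x - e k) * (Y k' x - e k')) := by
      intro k _
      exact Finset.sum_comm
    rw [Finset.sum_congr rfl swap2]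
    calc (∑ k ∈ K, ∑ k' ∈ K, ∑ x : Omega L, W w L x * ((Y k x - e k) * (Y k' x - e k')))
        ≤ ∑ k ∈ K, ∑ k' ∈ K, (if (k, k') ∈ Bad then (1:ℝ) else 0) := by
          apply Finset.sum_le_sum
          intro k hk
          apply Finset.sum_le_sum
          intro k' hk'
          by_cases hg : (k, k') ∈ Bad
          · rw [if_pos hg]
            exact pair_bad k hk k' hk'
          · rw [if_neg hg, pair_good k hk k' hk' hg]
      _ = ∑ p ∈ K ×ˢ K, (if p ∈ Bad then (1:ℝ) else 0) := by
          rw [Finset.sum_product]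
      _ ≤ (B : ℝ) := by
          rw [Finset.sum_ite_mem]
          rw [Finset.sum_const, nsmul_eq_mul, mul_one]
          have : ((K ×ˢ K) ∩ Bad).card ≤ B := le_trans (Finset.card_le_card
            (Finset.inter_subset_right)) hB
          exact_mod_cast this
  -- Chebyshev
  have cheb : P w L (fun x => δ ≤ |T x|) ≤ (∑ x : Omega L, W w L x * (T x)^2) / δ^2 := by
    rw [P, Finset.sum_div]
    apply Finset.sum_le_sum
    intro x _
    by_cases hx : δ ≤ |T x|
    · rw [if_pos hx]
      have h1x : δ^2 ≤ (T x)^2 := by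
        have := abs_nonneg (T x)
        nlinarith [sq_abs (T x)]
      rw [le_div_iff₀ (by positivity)]
      nlinarith [hWnn x]
    · rw [if_neg hx]
      have := hWnn x
      positivity
  calc P w L (fun x => δ ≤ |∑ k ∈ K, (Y k x - e k)|) ≤ (∑ x : Omega L, W w L x * (T x)^2) / δ^2 := cheb
    _ ≤ (B : ℝ) / δ^2 := by gcongr

end FinProb


open Filter

namespace Helpers

lemma sum_inv_sq (N : ℕ) (hN : 1 ≤ N) :
    ∀ M : ℕ, (∑ m ∈ Finset.Icc N M, (1:ℝ)/(m:ℝ)^2) ≤ 2/N := by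
  have key : ∀ d : ℕ, (∑ m ∈ Finset.Icc N (N + d), (1:ℝ)/(m:ℝ)^2)
      ≤ 2/N - 2/(N + d + 1 : ℕ) := by
    intro d
    induction d with
    | zero =>
      rw [Nat.add_zero, Finset.Icc_self, Finset.sum_singleton]
      have hN' : (1:ℝ) ≤ (N:ℝ) := by exact_mod_cast hN
      have h1 : (0:ℝ) < N := by linarith
      have h2 : (0:ℝ) < (N:ℝ) + 1 := by linarith
      have : ((N + 1 : ℕ) : ℝ) = (N:ℝ) + 1 := by push_cast; ring
      rw [this]
      rw [div_sub_div _ _ (ne_of_gt h1) (ne_of_gt h2), div_le_div_iff₀ (by positivity) (by positivity)]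
      ring_nf
      nlinarith
    | succ d ih =>
      rw [show N + (d+1) = (N + d) + 1 by ring, Finset.sum_Icc_succ_top (by omega)]
      have hm : (1:ℝ) ≤ ((N + d : ℕ) : ℝ) := by
        have : 1 ≤ N + d := by omega
        exact_mod_cast this
      have h1 : (0:ℝ) < ((N+d+1 : ℕ) : ℝ) := by positivity
      have h2 : (0:ℝ) < ((N+d+2 : ℕ) : ℝ) := by positivity
      have step : (1:ℝ)/((N+d+1 : ℕ):ℝ)^2 ≤ 2/((N+d+1:ℕ):ℝ) - 2/((N+d+2:ℕ):ℝ) := by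
        have e1 : ((N+d+1 : ℕ):ℝ) = ((N+d:ℕ):ℝ) + 1 := by push_cast; ring
        have e2 : ((N+d+2 : ℕ):ℝ) = ((N+d:ℕ):ℝ) + 2 := by push_cast; ring
        rw [e1, e2]
        rw [div_sub_div _ _ (by linarith) (by linarith), div_le_div_iff₀ (by positivity) (by positivity)]
        nlinarith
      have e3 : ((N + d + 1 : ℕ) : ℝ) = ((N + (d+1) :ℕ) : ℝ) := by push_cast; ring
      have e4 : ((N + (d+1) + 1 : ℕ) : ℝ) = ((N+d+2 :ℕ) : ℝ) := by push_cast; ring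
      calc (∑ m ∈ Finset.Icc N (N + d), (1:ℝ)/(m:ℝ)^2) + (1:ℝ)/((N+d+1:ℕ):ℝ)^2
          ≤ (2/N - 2/((N + d + 1 : ℕ):ℝ)) + (2/((N+d+1:ℕ):ℝ) - 2/((N+d+2:ℕ):ℝ)) := by
            exact add_le_add ih step
        _ = 2/N - 2/((N+d+2:ℕ):ℝ) := by ring
        _ = 2/N - 2/((N + (d+1) + 1 : ℕ):ℝ) := by rw [e4]
      
  intro M
  by_cases hM : M < N
  · rw [Finset.Icc_eq_empty (by omega), Finset.sum_empty]
    positivity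
  · push_neg at hM
    obtain ⟨d, rfl⟩ : ∃ d, M = N + d := ⟨M - N, by omega⟩
    have h := key d
    have : (0:ℝ) < ((N + d + 1 : ℕ):ℝ) := by positivity
    have : (0:ℝ) ≤ 2/((N + d + 1 : ℕ):ℝ) := by positivity
    linarith

lemma sum_Icc_one (f : ℕ → ℝ) (n : ℕ) :
    (∑ k ∈ Finset.Icc 1 n, f k) = ∑ j ∈ Finset.range n, f (j+1) := by
  have h : Finset.Icc 1 n = Finset.Ico 1 (n+1) := by
    ext k; simp [Nat.lt_succ_iff]
  rw [h, Finset.sum_Ico_eq_sum_range]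
  simp only [Nat.add_sub_cancel]
  exact Finset.sum_congr rfl fun j _ => by rw [Nat.add_comm 1 j]

lemma cesaro_Icc (u : ℕ → ℝ) (l : ℝ) (h : Tendsto u atTop (nhds l)) :
    Tendsto (fun n : ℕ => (∑ k ∈ Finset.Icc 1 n, u k) / n) atTop (nhds l) := by
  have h1 : Tendsto (fun j : ℕ => u (j+1)) atTop (nhds l) :=
    h.comp (tendsto_add_atTop_nat 1)
  have h2 := h1.cesaro
  apply h2.congr
  intro n
  rw [sum_Icc_one]
  rw [inv_mul_eq_div]

lemma sum_boole' (K : Finset ℕ) (φ : ℕ → Prop) [DecidablePred φ] :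
    (∑ k ∈ K, (if φ k then (1:ℝ) else 0)) = ((K.filter φ).card : ℝ) := by
  rw [Finset.sum_boole]

lemma real_est (A Bn x y mR : ℝ) (hmR : 1 ≤ mR) (hxm : x = mR^2) (hxy : x ≤ y)
    (hylt : y < x + 2*mR + 1) (hA0 : 0 ≤ A) (hAB : A ≤ Bn) (hAx : A ≤ x)
    (hstepR : Bn ≤ A + (y - x)) : |Bn/y - A/x| ≤ 3/mR := by
  have hxpos : (0:ℝ) < x := by nlinarith
  have hypos : (0:ℝ) < y := by linarith
  have hmpos : (0:ℝ) < mR := by linarith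
  have hyx : 0 ≤ y - x := by linarith
  have hyx2 : y - x ≤ 2*mR+1 := by linarith
  have d1 : A/x - Bn/y ≤ 3/mR := by
    rw [div_sub_div _ _ (ne_of_gt hxpos) (ne_of_gt hypos),
      div_le_div_iff₀ (by positivity) hmpos]
    have hf1 : A*y - Bn*x ≤ A*(y - x) := by nlinarith [mul_le_mul_of_nonneg_right hAB hxpos.le]
    have hf2 : A*(y-x) ≤ x*(2*mR+1) := mul_le_mul hAx hyx2 hyx (by linarith)
    have hc1 : A*y - Bn*x ≤ 3*x*mR := by nlinarith [mul_nonneg hxpos.le (show (0:ℝ) ≤ mR - 1 by linarith)]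
    have hc2 : (A*y - Bn*x)*mR ≤ (3*x*mR)*mR := mul_le_mul_of_nonneg_right hc1 hmpos.le
    have hc3 : (3*x*mR)*mR = 3*x*x := by rw [hxm]; ring
    have hc4 : 3*x*x ≤ 3*(x*y) := by nlinarith
    linarith
  have d2 : Bn/y - A/x ≤ 3/mR := by
    rw [div_sub_div _ _ (ne_of_gt hypos) (ne_of_gt hxpos),
      div_le_div_iff₀ (by positivity) hmpos]
    have hf1 : Bn*x - A*y ≤ (x - A)*(y - x) := by nlinarith [mul_le_mul_of_nonneg_right hstepR hxpos.le]
    have hf2 : (x - A)*(y - x) ≤ x*(2*mR+1) := mul_le_mul (by linarith) hyx2 hyx (by linarith)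
    have hc1 : Bn*x - A*y ≤ 3*x*mR := by nlinarith [mul_nonneg hxpos.le (show (0:ℝ) ≤ mR - 1 by linarith)]
    have hc2 : (Bn*x - A*y)*mR ≤ (3*x*mR)*mR := mul_le_mul_of_nonneg_right hc1 hmpos.le
    have hc3 : (3*x*mR)*mR = 3*x*x := by rw [hxm]; ring
    have hc4 : 3*x*x ≤ 3*(x*y) := by nlinarith
    linarith
  rw [abs_le]; constructor <;> linarith

/-- interpolation along squares -/
lemma interp (C : ℕ → ℕ) (hmono : Monotone C) (hC0 : C 0 = 0)
    (hstep : ∀ a b : ℕ, a ≤ b → C b ≤ C a + (b - a)) (p : ℝ)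
    (h : Tendsto (fun m : ℕ => (C (m^2) : ℝ) / ((m^2 : ℕ) : ℝ)) atTop (nhds p)) :
    Tendsto (fun n : ℕ => (C n : ℝ) / n) atTop (nhds p) := by
  rw [Metric.tendsto_atTop] at h ⊢
  intro ε hε
  obtain ⟨m₀, hm₀⟩ := h (ε/2) (by linarith)
  obtain ⟨m₁, hm₁⟩ := exists_nat_gt (6/ε)
  refine ⟨(max (max m₀ m₁) 1 + 1)^2, fun n hn => ?_⟩
  set m₂ := max (max m₀ m₁) 1 with hm₂
  set m := Nat.sqrt n with hm
  have hmsq : m^2 ≤ n := Nat.sqrt_le' n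
  have hmsq' : n < (m+1)^2 := Nat.lt_succ_sqrt' n
  have hmge : m₂ + 1 ≤ m := by
    have h1 := Nat.sqrt_le_sqrt hn
    rwa [Nat.sqrt_eq' (m₂+1)] at h1
  have hm1 : 1 ≤ m := by omega
  have hmR : (1:ℝ) ≤ (m:ℝ) := by exact_mod_cast hm1
  have hxm : ((m^2 : ℕ) : ℝ) = (m:ℝ)^2 := by push_cast; ring
  have hxy : ((m^2 : ℕ) : ℝ) ≤ (n:ℝ) := by exact_mod_cast hmsq
  have hylt : (n:ℝ) < ((m^2 : ℕ) : ℝ) + 2*(m:ℝ) + 1 := by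
    have : (n:ℝ) < (((m+1)^2 : ℕ) : ℝ) := by exact_mod_cast hmsq'
    push_cast at this ⊢
    nlinarith
  have hA0 : (0:ℝ) ≤ (C (m^2) : ℝ) := by positivity
  have hAB : (C (m^2) : ℝ) ≤ (C n : ℝ) := by exact_mod_cast hmono hmsq
  have hAx : (C (m^2) : ℝ) ≤ ((m^2 : ℕ) : ℝ) := by
    have h2 : C (m^2) ≤ m^2 := by
      have := hstep 0 (m^2) (by omega)
      omega
    exact_mod_cast h2
  have hstepR : (C n : ℝ) ≤ (C (m^2) : ℝ) + ((n:ℝ) - ((m^2 : ℕ) : ℝ)) := by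
    have h1 := hstep (m^2) n hmsq
    have h2 : (C n : ℝ) ≤ (C (m^2) : ℝ) + ((n - m^2 : ℕ) : ℝ) := by exact_mod_cast h1
    rw [Nat.cast_sub hmsq] at h2
    linarith
  have key := real_est (C (m^2) : ℝ) (C n : ℝ) ((m^2 : ℕ) : ℝ) (n:ℝ) (m:ℝ)
    hmR hxm hxy hylt hA0 hAB hAx hstepR
  have hC1 := hm₀ m (by omega)
  rw [Real.dist_eq] at hC1
  rw [Real.dist_eq]
  have hmpos : (0:ℝ) < (m:ℝ) := by linarith
  have h3m : 3/(m:ℝ) < ε/2 := by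
    have hm₁m : (m₁ : ℝ) ≤ (m:ℝ) := by exact_mod_cast (by omega : m₁ ≤ m)
    have h6ε : (6:ℝ)/ε < (m:ℝ) := lt_of_lt_of_le hm₁ hm₁m
    rw [div_lt_iff₀ hε] at h6ε
    rw [div_lt_iff₀ hmpos]
    nlinarith
  calc |(C n : ℝ)/(n:ℝ) - p|
      ≤ |(C n : ℝ)/(n:ℝ) - (C (m^2) : ℝ)/((m^2:ℕ):ℝ)|
        + |(C (m^2) : ℝ)/((m^2:ℕ):ℝ) - p| := abs_sub_le _ _ _
    _ < 3/(m:ℝ) + ε/2 := by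
        have := lt_of_le_of_lt (add_le_add_right key _) (add_lt_add_left hC1 _)
        linarith [key, hC1]
    _ < ε := by linarith

end Helpers
section Master

open Filter Finset

variable {ℓ : ℕ}

/-- strict increase along index chain -/
lemma q_lt_idx (hℓ : 1 ≤ ℓ) (q : Fin ℓ → ℕ → ℕ) (ε : ℝ) (hε0 : 0 < ε)
    (hqgap : ∀ i j : Fin ℓ, (i : ℕ) + 1 = (j : ℕ) → ∀ n : ℕ, 1 ≤ n →
      (q i n : ℝ) + ε * n ≤ q j n)
    (k : ℕ) (hk : 1 ≤ k) :
    ∀ (mj : ℕ) (hj : mj < ℓ) (mi : ℕ) (hi : mi < ℓ), mi < mj →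
      q ⟨mi, hi⟩ k < q ⟨mj, hj⟩ k := by
  intro mj
  induction mj with
  | zero => intro hj mi hi h; omega
  | succ mj ih =>
    intro hj mi hi h
    have hkR : (0:ℝ) < ε * k := by
      have : (1:ℝ) ≤ (k:ℝ) := by exact_mod_cast hk
      nlinarith
    have hmj : mj < ℓ := by omega
    have hstep : q ⟨mj, hmj⟩ k < q ⟨mj+1, hj⟩ k := by
      have := hqgap ⟨mj, hmj⟩ ⟨mj+1, hj⟩ rfl k hk
      have h2 : (q ⟨mj, hmj⟩ k : ℝ) < (q ⟨mj+1, hj⟩ k : ℝ) := by linarith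
      exact_mod_cast h2
    by_cases hmi : mi = mj
    · subst hmi
      exact hstep
    · exact lt_trans (ih hmj mi hi (by omega)) hstep

lemma q_lt_idx' (hℓ : 1 ≤ ℓ) (q : Fin ℓ → ℕ → ℕ) (ε : ℝ) (hε0 : 0 < ε)
    (hqgap : ∀ i j : Fin ℓ, (i : ℕ) + 1 = (j : ℕ) → ∀ n : ℕ, 1 ≤ n →
      (q i n : ℝ) + ε * n ≤ q j n)
    (k : ℕ) (hk : 1 ≤ k) (i j : Fin ℓ) (hij : (i:ℕ) < (j:ℕ)) : q i k < q j k := by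
  have := q_lt_idx hℓ q ε hε0 hqgap k hk (j:ℕ) j.isLt (i:ℕ) i.isLt hij
  simpa using this

lemma q_ge (hℓ : 1 ≤ ℓ) (q : Fin ℓ → ℕ → ℕ) (ε : ℝ) (hε0 : 0 < ε)
    (hq1 : ∀ k, q ⟨0, hℓ⟩ k = k)
    (hqgap : ∀ i j : Fin ℓ, (i : ℕ) + 1 = (j : ℕ) → ∀ n : ℕ, 1 ≤ n →
      (q i n : ℝ) + ε * n ≤ q j n)
    (i : Fin ℓ) (k : ℕ) (hk : 1 ≤ k) : k ≤ q i k := by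
  by_cases h0 : (i : ℕ) = 0
  · have : i = ⟨0, hℓ⟩ := Fin.ext h0
    rw [this, hq1]
  · have := q_lt_idx' hℓ q ε hε0 hqgap k hk ⟨0, hℓ⟩ i (by simp only [Fin.val_mk]; omega)
    rw [hq1] at this
    omega

lemma q_lt_k (q : Fin ℓ → ℕ → ℕ) (ε : ℝ) (hε0 : 0 < ε)
    (hqmono : ∀ (i : Fin ℓ) (n : ℕ), 1 ≤ n → (q i n : ℝ) + ε ≤ q i (n + 1))
    (i : Fin ℓ) : ∀ (k k' : ℕ), 1 ≤ k → k < k' → q i k < q i k' := by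
  have hstep : ∀ k : ℕ, 1 ≤ k → q i k < q i (k+1) := by
    intro k hk
    have := hqmono i k hk
    have h2 : (q i k : ℝ) < (q i (k+1) : ℝ) := by linarith
    exact_mod_cast h2
  have key : ∀ (d k : ℕ), 1 ≤ k → q i k < q i (k + d + 1) := by
    intro d
    induction d with
    | zero => intro k hk; exact hstep k hk
    | succ d ih =>
      intro k hk
      have h1 := ih k hk
      have h2 := hstep (k + d + 1) (by omega)
      have : k + (d+1) + 1 = (k + d + 1) + 1 := by ring
      rw [this]
      omega
  intro k k' hk hkk'
  obtain ⟨d, rfl⟩ : ∃ d, k' = k + d + 1 := ⟨k' - k - 1, by omega⟩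
  exact key d k hk

lemma q_inj_k (q : Fin ℓ → ℕ → ℕ) (ε : ℝ) (hε0 : 0 < ε)
    (hqmono : ∀ (i : Fin ℓ) (n : ℕ), 1 ≤ n → (q i n : ℝ) + ε ≤ q i (n + 1))
    (i : Fin ℓ) (k k' : ℕ) (hk : 1 ≤ k) (hk' : 1 ≤ k')
    (h : q i k = q i k') : k = k' := by
  rcases lt_trichotomy k k' with hlt | heq | hgt
  · have := q_lt_k q ε hε0 hqmono i k k' hk hlt; omega
  · exact heq
  · have := q_lt_k q ε hε0 hqmono i k' k hk' hgt; omega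

end Master

section Weights

open Filter Finset

noncomputable def Fpart (r : ℕ → ℝ) (m : ℕ) : ℝ := ∑ j ∈ Finset.range (m+1), r j

noncomputable def wfun (r : ℕ → ℝ) (m0 : ℕ) (c v : ℕ) : ℝ :=
  if v ≤ c then (if c+1 < m0 then (if v = 0 then 1 else 0) else r (v+1) / Fpart r (c+1)) else 0

variable {r : ℕ → ℝ} {m0 : ℕ}

lemma Fpart_mono (hrnn : ∀ j, 0 ≤ r j) : Monotone (Fpart r) := by
  intro a b hab
  apply Finset.sum_le_sum_of_subset_of_nonneg
  · exact Finset.range_subset_range.2 (by omega)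
  · intro j _ _; exact hrnn j

lemma Fpart_le_one (hrnn : ∀ j, 0 ≤ r j) (hrsum : HasSum r 1) (m : ℕ) :
    Fpart r m ≤ 1 := sum_le_hasSum _ (fun j _ => hrnn j) hrsum

lemma Fpart_nonneg (hrnn : ∀ j, 0 ≤ r j) (m : ℕ) : 0 ≤ Fpart r m :=
  Finset.sum_nonneg fun j _ => hrnn j

lemma r_le_Fpart (hrnn : ∀ j, 0 ≤ r j) {j m : ℕ} (hj : j ≤ m) : r j ≤ Fpart r m :=
  Finset.single_le_sum (fun i _ => hrnn i) (Finset.mem_range.2 (by omega))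

lemma wfun_nonneg (hrnn : ∀ j, 0 ≤ r j)
    (hFpos : ∀ m, m0 ≤ m → 0 < Fpart r m) (c v : ℕ) : 0 ≤ wfun r m0 c v := by
  rw [wfun]
  split
  · split
    · split <;> norm_num
    · next h =>
        exact div_nonneg (hrnn _) (hFpos (c+1) (by omega)).le
  · exact le_refl 0

lemma wfun_le_one (hrnn : ∀ j, 0 ≤ r j)
    (hFpos : ∀ m, m0 ≤ m → 0 < Fpart r m) (c v : ℕ) : wfun r m0 c v ≤ 1 := by
  rw [wfun]
  split
  · split
    · split <;> norm_num
    · next hvc h =>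
        rw [div_le_one (hFpos (c+1) (by omega))]
        exact r_le_Fpart hrnn (by omega)
  · norm_num

lemma wfun_supp (c v : ℕ) (h : c < v) : wfun r m0 c v = 0 := by
  rw [wfun, if_neg (by omega)]

lemma wfun_sum (hrnn : ∀ j, 0 ≤ r j) (hr0 : r 0 = 0)
    (hFpos : ∀ m, m0 ≤ m → 0 < Fpart r m) (c : ℕ) :
    ∑ t : Fin (c+1), wfun r m0 c t.val = 1 := by
  classical
  rw [Fin.sum_univ_eq_sum_range (fun j => wfun r m0 c j) (c+1)]
  by_cases hc : c + 1 < m0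
  · have : ∀ j ∈ Finset.range (c+1), wfun r m0 c j = (if j = 0 then 1 else 0) := by
      intro j hj
      rw [Finset.mem_range] at hj
      rw [wfun, if_pos (by omega), if_pos hc]
    rw [Finset.sum_congr rfl this]
    rw [Finset.sum_ite_eq' (Finset.range (c+1)) 0 (fun _ => (1:ℝ))]
    rw [if_pos (Finset.mem_range.2 (by omega))]
  · have hF : 0 < Fpart r (c+1) := hFpos (c+1) (by omega)
    have : ∀ j ∈ Finset.range (c+1), wfun r m0 c j = r (j+1) / Fpart r (c+1) := by
      intro j hj
      rw [Finset.mem_range] at hj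
      rw [wfun, if_pos (by omega), if_neg hc]
    rw [Finset.sum_congr rfl this, ← Finset.sum_div]
    rw [div_eq_one_iff_eq (ne_of_gt hF)]
    conv_rhs => rw [Fpart, Finset.sum_range_succ']
    rw [hr0, add_zero]

end Weights

section Core

open Filter Finset FinProb

noncomputable def digL (L : ℕ) (x : FinProb.Omega L) (m : ℕ) : ℕ :=
  if h : 1 ≤ m ∧ m ≤ L then ((x ⟨m-1, by omega⟩) : ℕ) + 1 else 1

variable {ℓ : ℕ}

lemma cheb_app (hℓ : 1 ≤ ℓ) (q : Fin ℓ → ℕ → ℕ) (ε : ℝ) (hε0 : 0 < ε)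
    (hq1 : ∀ k, q ⟨0, hℓ⟩ k = k)
    (hqgap : ∀ i j : Fin ℓ, (i : ℕ) + 1 = (j : ℕ) → ∀ n : ℕ, 1 ≤ n →
      (q i n : ℝ) + ε * n ≤ q j n)
    (hqmono : ∀ (i : Fin ℓ) (n : ℕ), 1 ≤ n → (q i n : ℝ) + ε ≤ q i (n + 1))
    (r : ℕ → ℝ) (m0 : ℕ) (hrnn : ∀ j, 0 ≤ r j) (hr0 : r 0 = 0)
    (hrsum : HasSum r 1) (hFpos : ∀ m, m0 ≤ m → 0 < Fpart r m)
    (α : Fin ℓ → ℕ) (hα : ∀ i, 1 ≤ α i) (n L : ℕ) (hn : 1 ≤ n)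
    (hL : ∀ k, k ∈ Finset.Icc 1 n → ∀ i, q i k ≤ L)
    (δ : ℝ) (hδ : 0 < δ) :
    FinProb.P (wfun r m0) L (fun x => δ ≤ |∑ k ∈ Finset.Icc 1 n,
        ((fun k x => if ∀ i, digL L x (q i k) = α i then (1:ℝ) else 0) k x
          - (fun k => ∏ i, wfun r m0 (q i k - 1) (α i - 1)) k)|)
      ≤ ((n * ℓ^2 : ℕ) : ℝ) / δ^2 := by
  classical
  set w := wfun r m0 with hw
  have hw0 : ∀ c u, 0 ≤ w c u := wfun_nonneg hrnn hFpos
  have hwsum : ∀ c, ∑ t : Fin (c+1), w c t.val = 1 := wfun_sum hrnn hr0 hFpos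
  have hwsupp : ∀ c u, c < u → w c u = 0 := wfun_supp
  set Y : ℕ → Omega L → ℝ :=
    fun k x => if ∀ i, digL L x (q i k) = α i then (1:ℝ) else 0 with hY
  set e : ℕ → ℝ := fun k => ∏ i, w (q i k - 1) (α i - 1) with he
  set Bad : Finset (ℕ × ℕ) := ((Finset.Icc 1 n) ×ˢ (Finset.Icc 1 n)).filter
    (fun p => ∃ ij : Fin ℓ × Fin ℓ, q ij.1 p.1 = q ij.2 p.2) with hBad
  -- facts about positions
  have hq1' : ∀ (i : Fin ℓ) (k : ℕ), 1 ≤ k → 1 ≤ q i k := by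
    intro i k hk
    have := q_ge hℓ q ε hε0 hq1 hqgap i k hk
    omega
  -- injective coordinate maps
  have hfk : ∀ k, 1 ≤ k → k ≤ n → ∀ i : Fin ℓ, q i k - 1 < L := by
    intro k h1 h2 i
    have ha := hq1' i k h1
    have hb := hL k (Finset.mem_Icc.2 ⟨h1, h2⟩) i
    omega
  have hY01 : ∀ k x, Y k x = 0 ∨ Y k x = 1 := by
    intro k x
    rw [hY]
    simp only
    split
    · right; rfl
    · left; rfl
  have he0 : ∀ k, 0 ≤ e k := by
    intro k
    exact Finset.prod_nonneg fun i _ => hw0 _ _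
  -- single cylinder identity
  have h1 : ∀ k ∈ Finset.Icc 1 n, (∑ x : Omega L, W w L x * Y k x) = e k := by
    intro k hk
    rw [Finset.mem_Icc] at hk
    set fk : Fin ℓ → Fin L := fun i => ⟨q i k - 1, hfk k hk.1 hk.2 i⟩ with hfkdef
    have hfk_inj : Function.Injective fk := by
      intro i j hij
      by_contra hne
      have hvals : q i k ≠ q j k := by
        rcases lt_trichotomy (i:ℕ) (j:ℕ) with h | h | h
        · exact Nat.ne_of_lt (q_lt_idx' hℓ q ε hε0 hqgap k hk.1 i j h)
        · exact absurd (Fin.ext h) hne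
        · exact (Nat.ne_of_lt (q_lt_idx' hℓ q ε hε0 hqgap k hk.1 j i h)).symm
      have h1i := hq1' i k hk.1
      have h1j := hq1' j k hk.1
      have : q i k - 1 = q j k - 1 := congrArg Fin.val hij
      omega
    have hdig : ∀ x : Omega L, ∀ i : Fin ℓ, digL L x (q i k) = ((x (fk i)) : ℕ) + 1 := by
      intro x i
      have hcond : 1 ≤ q i k ∧ q i k ≤ L :=
        ⟨hq1' i k hk.1, hL k (Finset.mem_Icc.2 hk) i⟩
      rw [digL, dif_pos hcond]
    have hcyl := FinProb.P_cyl w fk hfk_inj (fun i => α i - 1) hwsum hwsupp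
    have key : (∑ x : Omega L, W w L x * Y k x)
        = FinProb.P w L (fun x => ∀ i, ((x (fk i)) : ℕ) = α i - 1) := by
      rw [FinProb.P]
      refine Finset.sum_congr rfl fun x _ => ?_
      by_cases hc : ∀ i, ((x (fk i)) : ℕ) = α i - 1
      · rw [if_pos hc, hY]
        simp only
        rw [if_pos, mul_one]
        intro i
        rw [hdig x i, hc i]
        have := hα i
        omega
      · rw [if_neg hc, hY]
        simp only
        rw [if_neg, mul_zero]
        intro hall
        apply hc
        intro i
        have := hall i
        rw [hdig x i] at this
        have h2 := hα i
        omega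
    rw [key, hcyl, he]
  -- pair cylinder identity
  have h2 : ∀ k ∈ Finset.Icc 1 n, ∀ k' ∈ Finset.Icc 1 n, (k, k') ∉ Bad →
      (∑ x : Omega L, W w L x * (Y k x * Y k' x)) = e k * e k' := by
    intro k hk k' hk' hg
    rw [Finset.mem_Icc] at hk hk'
    have hdisj : ∀ i j : Fin ℓ, q i k ≠ q j k' := by
      intro i j heq
      apply hg
      rw [hBad]
      refine Finset.mem_filter.2 ⟨Finset.mem_product.2 ⟨Finset.mem_Icc.2 hk, Finset.mem_Icc.2 hk'⟩, ⟨(i, j), heq⟩⟩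
    set f2 : (Fin ℓ ⊕ Fin ℓ) → Fin L :=
      Sum.elim (fun i => ⟨q i k - 1, hfk k hk.1 hk.2 i⟩)
               (fun i => ⟨q i k' - 1, hfk k' hk'.1 hk'.2 i⟩) with hf2
    set v2 : (Fin ℓ ⊕ Fin ℓ) → ℕ := Sum.elim (fun i => α i - 1) (fun i => α i - 1) with hv2
    have hf2_inj : Function.Injective f2 := by
      intro s s' hss
      have hval : (f2 s : ℕ) = (f2 s' : ℕ) := congrArg Fin.val hss
      match s, s' with
      | Sum.inl i, Sum.inl j =>
        have h1i := hq1' i k hk.1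
        have h1j := hq1' j k hk.1
        have : q i k - 1 = q j k - 1 := hval
        have heq : q i k = q j k := by omega
        congr 1
        by_contra hne
        rcases lt_trichotomy (i:ℕ) (j:ℕ) with h | h | h
        · exact absurd heq (Nat.ne_of_lt (q_lt_idx' hℓ q ε hε0 hqgap k hk.1 i j h))
        · exact hne (Fin.ext h)
        · exact absurd heq.symm (Nat.ne_of_lt (q_lt_idx' hℓ q ε hε0 hqgap k hk.1 j i h))
      | Sum.inl i, Sum.inr j =>
        exfalso
        have h1i := hq1' i k hk.1
        have h1j := hq1' j k' hk'.1
        have : q i k - 1 = q j k' - 1 := hval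
        exact hdisj i j (by omega)
      | Sum.inr i, Sum.inl j =>
        exfalso
        have h1i := hq1' i k' hk'.1
        have h1j := hq1' j k hk.1
        have : q i k' - 1 = q j k - 1 := hval
        exact (hdisj j i (by omega)).elim
      | Sum.inr i, Sum.inr j =>
        have h1i := hq1' i k' hk'.1
        have h1j := hq1' j k' hk'.1
        have : q i k' - 1 = q j k' - 1 := hval
        have heq : q i k' = q j k' := by omega
        congr 1
        by_contra hne
        rcases lt_trichotomy (i:ℕ) (j:ℕ) with h | h | h
        · exact absurd heq (Nat.ne_of_lt (q_lt_idx' hℓ q ε hε0 hqgap k' hk'.1 i j h))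
        · exact hne (Fin.ext h)
        · exact absurd heq.symm (Nat.ne_of_lt (q_lt_idx' hℓ q ε hε0 hqgap k' hk'.1 j i h))
    have hdigk : ∀ x : Omega L, ∀ i : Fin ℓ, digL L x (q i k) = ((x (f2 (Sum.inl i))) : ℕ) + 1 := by
      intro x i
      have hcond : 1 ≤ q i k ∧ q i k ≤ L :=
        ⟨hq1' i k hk.1, hL k (Finset.mem_Icc.2 hk) i⟩
      rw [digL, dif_pos hcond]
      rfl
    have hdigk' : ∀ x : Omega L, ∀ i : Fin ℓ, digL L x (q i k') = ((x (f2 (Sum.inr i))) : ℕ) + 1 := by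
      intro x i
      have hcond : 1 ≤ q i k' ∧ q i k' ≤ L :=
        ⟨hq1' i k' hk'.1, hL k' (Finset.mem_Icc.2 hk') i⟩
      rw [digL, dif_pos hcond]
      rfl
    have hcyl := FinProb.P_cyl w f2 hf2_inj v2 hwsum hwsupp
    have key : (∑ x : Omega L, W w L x * (Y k x * Y k' x))
        = FinProb.P w L (fun x => ∀ s, ((x (f2 s)) : ℕ) = v2 s) := by
      rw [FinProb.P]
      refine Finset.sum_congr rfl fun x _ => ?_
      by_cases hc : ∀ s, ((x (f2 s)) : ℕ) = v2 s
      · rw [if_pos hc, hY]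
        simp only
        rw [if_pos, if_pos, mul_one, mul_one]
        · intro i
          rw [hdigk' x i]
          have := hc (Sum.inr i)
          rw [hv2] at this
          simp only [Sum.elim_inr] at this
          have h2 := hα i
          omega
        · intro i
          rw [hdigk x i]
          have := hc (Sum.inl i)
          rw [hv2] at this
          simp only [Sum.elim_inl] at this
          have h2 := hα i
          omega
      · rw [if_neg hc]
        push_neg at hc
        obtain ⟨s, hs⟩ := hc
        match s with
        | Sum.inl i =>
          rw [hY]
          simp only
          rw [if_neg, zero_mul, mul_zero]
          intro hall
          apply hs
          have := hall i
          rw [hdigk x i] at this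
          rw [hv2]
          simp only [Sum.elim_inl]
          have h2 := hα i
          omega
        | Sum.inr i =>
          rw [hY]
          simp only
          have : (if ∀ i, digL L x (q i k') = α i then (1:ℝ) else 0) = 0 := by
            rw [if_neg]
            intro hall
            apply hs
            have := hall i
            rw [hdigk' x i] at this
            rw [hv2]
            simp only [Sum.elim_inr]
            have h2 := hα i
            omega
          rw [this, mul_zero, mul_zero]
    rw [key, hcyl]
    rw [Fintype.prod_sum_type]
    rw [he]
    congr 1
  -- cardinality of Bad
  have hB : Bad.card ≤ n * ℓ^2 := by
    have hmaps : ∀ p ∈ Bad, (p.1, if h : ∃ ij : Fin ℓ × Fin ℓ, q ij.1 p.1 = q ij.2 p.2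
        then h.choose else (⟨0, hℓ⟩, ⟨0, hℓ⟩)) ∈ (Finset.Icc 1 n) ×ˢ (Finset.univ : Finset (Fin ℓ × Fin ℓ)) := by
      intro p hp
      rw [hBad, Finset.mem_filter] at hp
      exact Finset.mem_product.2 ⟨(Finset.mem_product.1 hp.1).1, Finset.mem_univ _⟩
    have hinj : ∀ p ∈ Bad, ∀ p' ∈ Bad,
        (p.1, if h : ∃ ij : Fin ℓ × Fin ℓ, q ij.1 p.1 = q ij.2 p.2
          then h.choose else (⟨0, hℓ⟩, ⟨0, hℓ⟩))
        = (p'.1, if h : ∃ ij : Fin ℓ × Fin ℓ, q ij.1 p'.1 = q ij.2 p'.2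
          then h.choose else (⟨0, hℓ⟩, ⟨0, hℓ⟩)) → p = p' := by
      intro p hp p' hp' heq
      rw [hBad, Finset.mem_filter] at hp hp'
      obtain ⟨hp1, hpe⟩ := hp
      obtain ⟨hp1', hpe'⟩ := hp'
      rw [dif_pos hpe, dif_pos hpe'] at heq
      rw [Prod.mk.injEq] at heq
      obtain ⟨heq1, heq2⟩ := heq
      have hs1 := hpe.choose_spec
      have hs2 := hpe'.choose_spec
      rw [heq2, heq1] at hs1
      have hmem1 := Finset.mem_product.1 hp1
      have hmem2 := Finset.mem_product.1 hp1'
      have hk2 : 1 ≤ p.2 := (Finset.mem_Icc.1 hmem1.2).1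
      have hk2' : 1 ≤ p'.2 := (Finset.mem_Icc.1 hmem2.2).1
      have : p.2 = p'.2 :=
        q_inj_k q ε hε0 hqmono hpe'.choose.2 p.2 p'.2 hk2 hk2' (hs1.symm.trans hs2)
      exact Prod.ext heq1 this
    have hcard := Finset.card_le_card_of_injOn _ hmaps hinj
    calc Bad.card ≤ ((Finset.Icc 1 n) ×ˢ (Finset.univ : Finset (Fin ℓ × Fin ℓ))).card := hcard
      _ = n * ℓ^2 := by
          rw [Finset.card_product, Nat.card_Icc, Finset.card_univ]
          simp only [Fintype.card_prod, Fintype.card_fin]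
          have : n + 1 - 1 = n := by omega
          rw [this, pow_two]
  exact FinProb.chebyshev w L (Finset.Icc 1 n) Y e Bad (n * ℓ^2)
    hw0 hwsum hY01 he0 h1 h2 hB δ hδ

end Core

namespace FinProb

variable (w : ℕ → ℕ → ℝ)

open scoped Classical in
lemma P_of_false (L : ℕ) (φ : Omega L → Prop) (h : ∀ x, ¬ φ x) : P w L φ = 0 := by
  rw [P]
  exact Finset.sum_eq_zero fun x _ => if_neg (h x)

open scoped Classical in
lemma P_exists_le (hw0 : ∀ c u, 0 ≤ w c u) (L : ℕ) (s : Finset ℕ) (φ : ℕ → Omega L → Prop) :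
    P w L (fun x => ∃ v ∈ s, φ v x) ≤ ∑ v ∈ s, P w L (φ v) := by
  classical
  induction s using Finset.induction with
  | empty =>
    rw [Finset.sum_empty]
    rw [P_of_false w L _ (fun x h => by simp at h)]
  | insert b s' ha ih =>
    rw [Finset.sum_insert ha]
    calc P w L (fun x => ∃ v ∈ insert b s', φ v x)
        ≤ P w L (fun x => φ b x ∨ ∃ v ∈ s', φ v x) := by
          apply P_le w hw0
          intro x hx
          obtain ⟨v, hv, hφ⟩ := hx
          rcases Finset.mem_insert.1 hv with rfl | hv'
          · exact Or.inl hφ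
          · exact Or.inr ⟨v, hv', hφ⟩
      _ ≤ P w L (φ b) + P w L (fun x => ∃ v ∈ s', φ v x) := P_union w hw0 L _ _
      _ ≤ P w L (φ b) + ∑ v ∈ s', P w L (φ v) := by linarith [ih]

end FinProb

section Assemble

open Filter Finset

def digSeq (ω : ∀ c : ℕ, Fin (c+1)) (m : ℕ) : ℕ :=
  if 1 ≤ m then ((ω (m-1)) : ℕ) + 1 else 1

lemma digSeq_OK (ω : ∀ c : ℕ, Fin (c+1)) : CFAux.OK (digSeq ω) := by
  intro m
  rw [digSeq]
  split <;> omega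

lemma digSeq_le (ω : ∀ c : ℕ, Fin (c+1)) (m : ℕ) (hm : 1 ≤ m) : digSeq ω m ≤ m := by
  rw [digSeq, if_pos hm]
  have := (ω (m-1)).isLt
  omega

def resX (L : ℕ) (ω : ∀ c : ℕ, Fin (c+1)) : FinProb.Omega L := fun c => ω c.val

def extX (L : ℕ) (x : FinProb.Omega L) : ∀ c : ℕ, Fin (c+1) :=
  fun c => if h : c < L then x ⟨c, h⟩ else ⟨0, Nat.succ_pos c⟩

lemma digSeq_res (L : ℕ) (ω : ∀ c : ℕ, Fin (c+1)) (m : ℕ) (h1 : 1 ≤ m) (h2 : m ≤ L) :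
    digL L (resX L ω) m = digSeq ω m := by
  rw [digL, dif_pos ⟨h1, h2⟩, digSeq, if_pos h1]
  rfl

lemma digSeq_ext (L : ℕ) (x : FinProb.Omega L) (m : ℕ) (h1 : 1 ≤ m) (h2 : m ≤ L) :
    digSeq (extX L x) m = digL L x m := by
  rw [digL, dif_pos ⟨h1, h2⟩, digSeq, if_pos h1, extX]
  simp only
  rw [dif_pos (by omega : m - 1 < L)]

lemma continuous_resX (L : ℕ) : Continuous (resX L) :=
  continuous_pi fun c => continuous_apply c.val

variable {ℓ : ℕ}

def maxPos (q : Fin ℓ → ℕ → ℕ) (n : ℕ) : ℕ :=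
  (Finset.Icc 1 n).sup fun k => (Finset.univ : Finset (Fin ℓ)).sup fun i => q i k

lemma le_maxPos (q : Fin ℓ → ℕ → ℕ) (n k : ℕ) (hk : k ∈ Finset.Icc 1 n) (i : Fin ℓ) :
    q i k ≤ maxPos q n :=
  le_trans (Finset.le_sup (f := fun j : Fin ℓ => q j k) (Finset.mem_univ i))
    (Finset.le_sup (f := fun k => (Finset.univ : Finset (Fin ℓ)).sup fun j => q j k) hk)

noncomputable def SDsum (q : Fin ℓ → ℕ → ℕ) (r : ℕ → ℝ) (m0 : ℕ) (b : ℕ → ℕ)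
    (α : Fin ℓ → ℕ) (n : ℕ) : ℝ :=
  ∑ k ∈ Finset.Icc 1 n, ((if ∀ i, b (q i k) = α i then (1:ℝ) else 0)
    - ∏ i, wfun r m0 (q i k - 1) (α i - 1))

lemma SDsum_congr (q : Fin ℓ → ℕ → ℕ) (r : ℕ → ℝ) (m0 : ℕ) (b b' : ℕ → ℕ)
    (α : Fin ℓ → ℕ) (n : ℕ) (hq1' : ∀ (i : Fin ℓ) (k : ℕ), 1 ≤ k → 1 ≤ q i k)
    (h : ∀ p, 1 ≤ p → p ≤ maxPos q n → b p = b' p) :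
    SDsum q r m0 b α n = SDsum q r m0 b' α n := by
  rw [SDsum, SDsum]
  refine Finset.sum_congr rfl fun k hk => ?_
  have hkm := Finset.mem_Icc.1 hk
  have : (∀ i, b (q i k) = α i) ↔ (∀ i, b' (q i k) = α i) := by
    apply forall_congr'
    intro i
    rw [h (q i k) (hq1' i k hkm.1) (le_maxPos q n k hk i)]
  rw [if_congr this rfl rfl]

end Assemble

section Final

open Filter Finset

variable {ℓ : ℕ}

lemma cheb_app2 (hℓ : 1 ≤ ℓ) (q : Fin ℓ → ℕ → ℕ) (ε : ℝ) (hε0 : 0 < ε)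
    (hq1 : ∀ k, q ⟨0, hℓ⟩ k = k)
    (hqgap : ∀ i j : Fin ℓ, (i : ℕ) + 1 = (j : ℕ) → ∀ n : ℕ, 1 ≤ n →
      (q i n : ℝ) + ε * n ≤ q j n)
    (hqmono : ∀ (i : Fin ℓ) (n : ℕ), 1 ≤ n → (q i n : ℝ) + ε ≤ q i (n + 1))
    (r : ℕ → ℝ) (m0 : ℕ) (hrnn : ∀ j, 0 ≤ r j) (hr0 : r 0 = 0)
    (hrsum : HasSum r 1) (hFpos : ∀ m, m0 ≤ m → 0 < Fpart r m)
    (α : Fin ℓ → ℕ) (hα : ∀ i, 1 ≤ α i) (n L : ℕ) (hn : 1 ≤ n)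
    (hL : ∀ k, k ∈ Finset.Icc 1 n → ∀ i, q i k ≤ L)
    (δ : ℝ) (hδ : 0 < δ) :
    FinProb.P (wfun r m0) L (fun x => δ ≤ |SDsum q r m0 (digL L x) α n|)
      ≤ ((n * ℓ^2 : ℕ) : ℝ) / δ^2 :=
  cheb_app hℓ q ε hε0 hq1 hqgap hqmono r m0 hrnn hr0 hrsum hFpos α hα n L hn hL δ hδ

end Final

/-- Construction in the proof of Proposition 2.9: if `q_1(k) = k` and
`p_α = Π_i r_{α_i}` for a probability vector `r̄ = (r_1,r_2,…)` on the positive integers,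
then there is an irrational `z ∈ (0,1)` lying in `U_p` whose continued fraction digits
satisfy `a_n(z) ≤ n` for all `n ≥ 1`; in particular `U_p ≠ ∅`. -/
theorem exists_point_in_UsetCF (ℓ : ℕ) (hℓ : 1 ≤ ℓ)
    (q : Fin ℓ → ℕ → ℕ) (ε : ℝ) (hε0 : 0 < ε) (hε1 : ε ≤ 1)
    (hq1 : ∀ k, q ⟨0, hℓ⟩ k = k)
    (hqpos : ∀ i n, 1 ≤ n → 1 ≤ q i n)
    (hqgap : ∀ i j : Fin ℓ, (i : ℕ) + 1 = (j : ℕ) → ∀ n : ℕ, 1 ≤ n →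
      (q i n : ℝ) + ε * n ≤ q j n)
    (hqmono : ∀ (i : Fin ℓ) (n : ℕ), 1 ≤ n → (q i n : ℝ) + ε ≤ q i (n + 1))
    (r : ℕ → ℝ) (hrnn : ∀ j, 0 ≤ r j) (hr0 : r 0 = 0) (hrsum : HasSum r 1) :
    ∃ z ∈ Set.Ioo (0 : ℝ) 1, Irrational z ∧
      z ∈ UsetCF q (fun α => ∏ i, r (α i)) ∧
      ∀ n : ℕ, 1 ≤ n → cfDigit n z ≤ n := by
  classical
  -- weight setup
  have hFmono := Fpart_mono hrnn
  have hFtend : Tendsto (Fpart r) atTop (nhds 1) :=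
    hrsum.tendsto_sum_nat.comp (tendsto_add_atTop_nat 1)
  have hm0ex : ∃ m, 0 < Fpart r m :=
    (hFtend.eventually (eventually_gt_nhds (by norm_num : (0:ℝ) < 1))).exists
  set m0 := Nat.find hm0ex with hm0def
  have hFpos : ∀ m, m0 ≤ m → 0 < Fpart r m := fun m hm =>
    lt_of_lt_of_le (Nat.find_spec hm0ex) (hFmono hm)
  have hqge := q_ge hℓ q ε hε0 hq1 hqgap
  have hq1' : ∀ (i : Fin ℓ) (k : ℕ), 1 ≤ k → 1 ≤ q i k := by
    intro i k hk
    have := hqge i k hk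
    omega
  -- enumeration of (word, accuracy) pairs
  obtain ⟨G, hG⟩ := exists_surjective_nat ((Fin ℓ → ℕ) × ℕ)
  set A : ℕ → (Fin ℓ → ℕ) := fun s i => max ((G s).1 i) 1 with hA
  have hApos : ∀ s i, 1 ≤ A s i := fun s i => le_max_right _ _
  set T : ℕ → ℕ := fun s => (G s).2 with hT
  set N : ℕ → ℕ := fun s => ℓ^2 * (T s + 1)^2 * 2^(s+3) + 1 with hN
  have hN1 : ∀ s, 1 ≤ N s := fun s => by simp only [hN]; exact Nat.succ_le_succ (Nat.zero_le _)
  -- the constraint sets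
  set Cset : ℕ → ℕ → Set (∀ c : ℕ, Fin (c+1)) := fun s m =>
    resX (maxPos q (m^2)) ⁻¹'
      {x | m < N s ∨ |SDsum q r m0 (digL (maxPos q (m^2)) x) (A s) (m^2)|
        < ((m^2 : ℕ) : ℝ) / (T s + 1)} with hCset
  have hCset_mem : ∀ s m ω, ω ∈ Cset s m ↔
      (m < N s ∨ |SDsum q r m0 (digSeq ω) (A s) (m^2)| < ((m^2 : ℕ) : ℝ) / (T s + 1)) := by
    intro s m ω
    rw [hCset]
    simp only [Set.mem_preimage, Set.mem_setOf_eq]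
    have heq : SDsum q r m0 (digL (maxPos q (m^2)) (resX (maxPos q (m^2)) ω)) (A s) (m^2)
        = SDsum q r m0 (digSeq ω) (A s) (m^2) := by
      apply SDsum_congr q r m0 _ _ _ _ hq1'
      intro p h1 h2
      exact digSeq_res _ ω p h1 h2
    rw [heq]
  have hCset_closed : ∀ s m, IsClosed (Cset s m) := by
    intro s m
    rw [hCset]
    exact (isClosed_discrete _).preimage (continuous_resX _)
  -- nonemptiness of finite intersections
  have hDne : ∀ u : ℕ,
      (⋂ v ∈ Finset.range (u+1), Cset (Nat.unpair v).1 (Nat.unpair v).2).Nonempty := by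
    intro u
    set Λ := (Finset.range (u+1)).sup (fun v => maxPos q ((Nat.unpair v).2^2)) with hΛ
    set w := wfun r m0 with hw
    have hw0 : ∀ c v, 0 ≤ w c v := wfun_nonneg hrnn hFpos
    have hwsum : ∀ c, ∑ t : Fin (c+1), w c t.val = 1 := wfun_sum hrnn hr0 hFpos
    set bad : ℕ → FinProb.Omega Λ → Prop := fun v x =>
      N (Nat.unpair v).1 ≤ (Nat.unpair v).2 ∧
        (((Nat.unpair v).2^2 : ℕ) : ℝ) / (T (Nat.unpair v).1 + 1)
          ≤ |SDsum q r m0 (digL Λ x) (A (Nat.unpair v).1) ((Nat.unpair v).2^2)| with hbad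
    set c' : ℕ × ℕ → ℝ := fun p =>
      if N p.1 ≤ p.2 then ((ℓ^2 * (T p.1 + 1)^2 : ℕ) : ℝ) / ((p.2 : ℝ))^2 else 0 with hc'
    have hc'nn : ∀ p, 0 ≤ c' p := by
      intro p
      simp only [hc']
      split
      · positivity
      · exact le_refl 0
    have hPb : ∀ v ∈ Finset.range (u+1),
        FinProb.P w Λ (bad v) ≤ c' (Nat.unpair v) := by
      intro v hv
      set s := (Nat.unpair v).1 with hs
      set m := (Nat.unpair v).2 with hm
      by_cases hNm : N s ≤ m
      · have hm1 : 1 ≤ m := le_trans (hN1 s) hNm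
        have hmpos : (0:ℝ) < (m:ℝ) := by exact_mod_cast hm1
        have hm2pos : (0:ℝ) < ((m^2 : ℕ) : ℝ) := by
          have : 1 ≤ m^2 := by nlinarith
          exact_mod_cast this
        have hδpos : (0:ℝ) < ((m^2 : ℕ) : ℝ) / (T s + 1) := by positivity
        have hL : ∀ k, k ∈ Finset.Icc 1 (m^2) → ∀ i, q i k ≤ Λ := by
          intro k hk i
          calc q i k ≤ maxPos q (m^2) := le_maxPos q (m^2) k hk i
            _ ≤ Λ := by
                rw [hΛ]
                exact Finset.le_sup (f := fun v => maxPos q ((Nat.unpair v).2^2)) hv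
        have hcheb := cheb_app2 hℓ q ε hε0 hq1 hqgap hqmono r m0 hrnn hr0 hrsum hFpos
          (A s) (hApos s) (m^2) Λ (by nlinarith) hL _ hδpos
        have hPle : FinProb.P w Λ (bad v) ≤ FinProb.P w Λ
            (fun x => ((m^2 : ℕ) : ℝ) / (T s + 1)
              ≤ |SDsum q r m0 (digL Λ x) (A s) (m^2)|) := by
          apply FinProb.P_le w hw0
          intro x hx
          exact hx.2
        have hval : ((m^2 * ℓ^2 : ℕ) : ℝ) / (((m^2 : ℕ) : ℝ) / (T s + 1))^2
            = c' (Nat.unpair v) := by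
          simp only [hc']
          rw [← hm, ← hs]
          rw [if_pos hNm]
          have h2 : (0:ℝ) < (T s + 1 : ℝ) := by positivity
          push_cast
          field_simp
        calc FinProb.P w Λ (bad v) ≤ _ := hPle
          _ ≤ ((m^2 * ℓ^2 : ℕ) : ℝ) / (((m^2 : ℕ) : ℝ) / (T s + 1))^2 := hcheb
          _ = c' (Nat.unpair v) := hval
      · have : ∀ x, ¬ bad v x := by
          intro x hx
          exact hNm hx.1
        rw [FinProb.P_of_false w Λ _ this]
        simp only [hc']
        rw [if_neg hNm]
    have hsum_le : ∑ v ∈ Finset.range (u+1), c' (Nat.unpair v) ≤ 1/2 := by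
      have hinj : ∀ x ∈ Finset.range (u+1), ∀ y ∈ Finset.range (u+1),
          Nat.unpair x = Nat.unpair y → x = y := by
        intro x _ y _ h
        have hx := Nat.pair_unpair x
        have hy := Nat.pair_unpair y
        rw [← hx, ← hy, h]
      rw [← Finset.sum_image hinj]
      have hsub : (Finset.range (u+1)).image Nat.unpair
          ⊆ (Finset.range (u+1)) ×ˢ (Finset.range (u+1)) := by
        intro p hp
        obtain ⟨v, hv, rfl⟩ := Finset.mem_image.1 hp
        rw [Finset.mem_range] at hv
        refine Finset.mem_product.2 ⟨Finset.mem_range.2 ?_, Finset.mem_range.2 ?_⟩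
        · have := Nat.unpair_left_le v; omega
        · have := Nat.unpair_right_le v; omega
      calc ∑ p ∈ (Finset.range (u+1)).image Nat.unpair, c' p
          ≤ ∑ p ∈ (Finset.range (u+1)) ×ˢ (Finset.range (u+1)), c' p :=
            Finset.sum_le_sum_of_subset_of_nonneg hsub (fun p _ _ => hc'nn p)
        _ = ∑ s ∈ Finset.range (u+1), ∑ m ∈ Finset.range (u+1), c' (s, m) := by
            rw [Finset.sum_product]
        _ ≤ ∑ s ∈ Finset.range (u+1), (1/2:ℝ)^s / 4 := by
            apply Finset.sum_le_sum
            intro s _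
            -- inner sum bound
            have hKnat : (1:ℕ) ≤ ℓ^2 * (T s + 1)^2 :=
              Nat.mul_pos (pow_pos (by omega) 2) (pow_pos (by omega) 2)
            set K : ℝ := ((ℓ^2 * (T s + 1)^2 : ℕ) : ℝ) with hK
            have hK1 : (1:ℝ) ≤ K := by rw [hK]; exact_mod_cast hKnat
            have hKpos : (0:ℝ) < K := by linarith
            have he1 : ∀ m : ℕ, c' (s, m) = if N s ≤ m then K/(m:ℝ)^2 else 0 := by
              intro m
              simp only [hc', hK]
            have hstep1 : ∑ m ∈ Finset.range (u+1), c' (s, m)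
                ≤ ∑ m ∈ Finset.Icc (N s) u, K / (m:ℝ)^2 := by
              rw [Finset.sum_congr rfl (fun m _ => he1 m), ← Finset.sum_filter]
              apply Finset.sum_le_sum_of_subset_of_nonneg
              · intro m hm
                rw [Finset.mem_filter, Finset.mem_range] at hm
                rw [Finset.mem_Icc]
                omega
              · intro m _ _
                positivity
            have hstep2 : ∑ m ∈ Finset.Icc (N s) u, K / (m:ℝ)^2 ≤ K * (2 / N s) := by
              have : ∑ m ∈ Finset.Icc (N s) u, K / (m:ℝ)^2
                  = K * ∑ m ∈ Finset.Icc (N s) u, (1:ℝ)/(m:ℝ)^2 := by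
                rw [Finset.mul_sum]
                exact Finset.sum_congr rfl fun m _ => by ring
              rw [this]
              exact mul_le_mul_of_nonneg_left (Helpers.sum_inv_sq (N s) (hN1 s) u) hKpos.le
            have hstep3 : K * (2 / N s) ≤ (1/2:ℝ)^s / 4 := by
              have hNge : (K * 2^(s+3) : ℝ) ≤ (N s : ℝ) := by
                have hNn : (ℓ^2 * (T s + 1)^2) * 2^(s+3) ≤ N s := by
                  simp only [hN]
                  omega
                calc (K * 2^(s+3) : ℝ) = (((ℓ^2 * (T s + 1)^2) * 2^(s+3) : ℕ) : ℝ) := by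
                      rw [hK]; push_cast; ring
                  _ ≤ (N s : ℝ) := by exact_mod_cast hNn
              have h2pow : (0:ℝ) < (2:ℝ)^(s+3) := by positivity
              have hKp : (0:ℝ) < K * 2^(s+3) := by positivity
              have hNpos : (0:ℝ) < (N s : ℝ) := by
                have := hN1 s
                exact_mod_cast this
              have h1 : K * (2 / N s) = 2 * K / N s := by ring
              rw [h1]
              calc 2 * K / (N s : ℝ) ≤ 2 * K / (K * 2^(s+3)) := by
                    gcongr
                _ = 2 / 2^(s+3) := by
                    rw [div_eq_div_iff (ne_of_gt hKp) (ne_of_gt h2pow)]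
                    ring
                _ = (1/2:ℝ)^s / 4 := by
                    rw [one_div_pow, pow_add]
                    have h2s : (0:ℝ) < (2:ℝ)^s := by positivity
                    field_simp
                    ring
            calc ∑ m ∈ Finset.range (u+1), c' (s, m)
                ≤ K * (2 / N s) := le_trans hstep1 hstep2
              _ ≤ (1/2:ℝ)^s / 4 := hstep3
        _ ≤ 1/2 := by
            rw [← Finset.sum_div]
            have := sum_geometric_two_le (u+1)
            linarith
    have hlt1 : FinProb.P w Λ (fun x => ∃ v ∈ Finset.range (u+1), bad v x) < 1 := by
      calc FinProb.P w Λ (fun x => ∃ v ∈ Finset.range (u+1), bad v x)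
          ≤ ∑ v ∈ Finset.range (u+1), FinProb.P w Λ (bad v) :=
            FinProb.P_exists_le w hw0 Λ _ _
        _ ≤ ∑ v ∈ Finset.range (u+1), c' (Nat.unpair v) := Finset.sum_le_sum hPb
        _ ≤ 1/2 := hsum_le
        _ < 1 := by norm_num
    obtain ⟨x, hx⟩ := FinProb.exists_not_of_P_lt_one w Λ hwsum _ hlt1
    push_neg at hx
    refine ⟨extX Λ x, ?_⟩
    rw [Set.mem_iInter₂]
    intro v hv
    rw [hCset_mem]
    set s := (Nat.unpair v).1
    set m := (Nat.unpair v).2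
    by_cases hNm : N s ≤ m
    · right
      have hbadv := hx v hv
      rw [hbad] at hbadv
      simp only [not_and] at hbadv
      have h2 := hbadv hNm
      push_neg at h2
      have heq : SDsum q r m0 (digSeq (extX Λ x)) (A s) (m^2)
          = SDsum q r m0 (digL Λ x) (A s) (m^2) := by
        apply SDsum_congr q r m0 _ _ _ _ hq1'
        intro p h1 hp2
        apply digSeq_ext
        · exact h1
        · calc p ≤ maxPos q (m^2) := hp2
            _ ≤ Λ := by
                rw [hΛ]
                exact Finset.le_sup (f := fun v => maxPos q ((Nat.unpair v).2^2)) hv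
      rw [heq]
      exact h2
    · left; omega
  -- compactness: a point satisfying all constraints
  have hclosed : ∀ u : ℕ,
      IsClosed (⋂ v ∈ Finset.range (u+1), Cset (Nat.unpair v).1 (Nat.unpair v).2) := by
    intro u
    apply isClosed_biInter
    intro v _
    exact hCset_closed _ _
  have hsub : ∀ u : ℕ,
      (⋂ v ∈ Finset.range (u+2), Cset (Nat.unpair v).1 (Nat.unpair v).2)
        ⊆ ⋂ v ∈ Finset.range (u+1), Cset (Nat.unpair v).1 (Nat.unpair v).2 := by
    intro u ω hω
    rw [Set.mem_iInter₂] at hω ⊢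
    intro v hv
    exact hω v (by rw [Finset.mem_range] at hv ⊢; omega)
  obtain ⟨ω, hω⟩ := IsCompact.nonempty_iInter_of_sequence_nonempty_isCompact_isClosed
    (fun u => ⋂ v ∈ Finset.range (u+1), Cset (Nat.unpair v).1 (Nat.unpair v).2)
    hsub hDne ((hclosed 0).isCompact) hclosed
  have hωC : ∀ s m : ℕ, ω ∈ Cset s m := by
    intro s m
    have h1 : ω ∈ ⋂ v ∈ Finset.range (Nat.pair s m + 1), Cset (Nat.unpair v).1 (Nat.unpair v).2 := by
      have := Set.mem_iInter.1 hω (Nat.pair s m)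
      exact this
    rw [Set.mem_iInter₂] at h1
    have h2 := h1 (Nat.pair s m) (Finset.mem_range.2 (by omega))
    rwa [Nat.unpair_pair] at h2
  -- the point z
  have hOK : CFAux.OK (digSeq ω) := digSeq_OK ω
  set z := CFAux.val (digSeq ω) with hz
  have hz_dig : ∀ n, cfDigit n z = digSeq ω n := CFAux.cfDigit_val (digSeq ω) hOK
  have hz_mem : z ∈ Set.Ioo (0:ℝ) 1 :=
    ⟨CFAux.val_pos _ hOK, CFAux.val_lt_one _ hOK⟩
  have hz_irr : Irrational z := by
    apply CFAux.irrational_of_orbit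
    intro n
    rw [hz, CFAux.gauss_iter _ hOK n]
    exact ⟨CFAux.val_pos _ (CFAux.shfIter_OK _ hOK n), CFAux.val_lt_one _ (CFAux.shfIter_OK _ hOK n)⟩
  have hz_le : ∀ n : ℕ, 1 ≤ n → cfDigit n z ≤ n := by
    intro n hn
    rw [hz_dig n]
    exact digSeq_le ω n hn
  -- the convergence
  have htend : ∀ α : Fin ℓ → ℕ, (∀ i, 1 ≤ α i) →
      Tendsto (fun n : ℕ => (NwordCF q α z n : ℝ) / n) atTop (nhds (∏ i, r (α i))) := by
    intro α hα
    set Cnt : ℕ → ℕ := fun n =>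
      ((Finset.Icc 1 n).filter (fun k => ∀ i, digSeq ω (q i k) = α i)).card with hCnt
    have hNword : ∀ n, NwordCF q α z n = Cnt n := by
      intro n
      rw [NwordCF, hCnt]
      congr 1
      apply Finset.filter_congr
      intro k _
      exact forall_congr' fun i => by rw [hz_dig]
    set e : ℕ → ℝ := fun k => ∏ i, wfun r m0 (q i k - 1) (α i - 1) with he
    -- limit of e
    have hel : Tendsto e atTop (nhds (∏ i, r (α i))) := by
      rw [he]
      apply tendsto_finset_prod
      intro i _
      have hqiT : Tendsto (fun k => q i k) atTop atTop := by
        apply tendsto_atTop_mono' atTop ?_ tendsto_id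
        filter_upwards [eventually_ge_atTop 1] with k hk
        exact hqge i k hk
      have hFcomp : Tendsto (fun k => Fpart r (q i k)) atTop (nhds 1) :=
        hFtend.comp hqiT
      have hdivT : Tendsto (fun k => r (α i) / Fpart r (q i k)) atTop (nhds (r (α i))) := by
        have h1 := Filter.Tendsto.div (tendsto_const_nhds (x := r (α i))) hFcomp one_ne_zero
        rw [div_one] at h1; exact h1
      apply hdivT.congr'
      filter_upwards [eventually_ge_atTop (max m0 (α i) + 1)] with k hk
      have hk1 : 1 ≤ k := by omega
      have hqk := hqge i k hk1
      have hm0k : m0 ≤ k := by omega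
      have hαk : α i + 1 ≤ k := by omega
      have h1 : α i - 1 ≤ q i k - 1 := by omega
      rw [wfun, if_pos h1, if_neg (by omega)]
      have h2 : α i - 1 + 1 = α i := by have := hα i; omega
      have h3 : q i k - 1 + 1 = q i k := by have := hq1' i k hk1; omega
      rw [h2, h3]
    have hEdiv : Tendsto (fun n : ℕ => (∑ k ∈ Finset.Icc 1 n, e k) / n) atTop
        (nhds (∏ i, r (α i))) := Helpers.cesaro_Icc e _ hel
    have hsqT : Tendsto (fun m : ℕ => m^2) atTop atTop :=
      tendsto_atTop_mono (fun m => Nat.le_self_pow two_ne_zero m) tendsto_id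
    have hEsq : Tendsto (fun m : ℕ => (∑ k ∈ Finset.Icc 1 (m^2), e k) / ((m^2 : ℕ) : ℝ))
        atTop (nhds (∏ i, r (α i))) := hEdiv.comp hsqT
    -- identity SDsum = Cnt - E
    have hSD_eq : ∀ n, SDsum q r m0 (digSeq ω) α n
        = (Cnt n : ℝ) - ∑ k ∈ Finset.Icc 1 n, e k := by
      intro n
      rw [SDsum, Finset.sum_sub_distrib]
      congr 1
      rw [hCnt]
      rw [Finset.sum_boole]
    -- constraints give the subsequence limit
    have hdiff0 : Tendsto (fun m : ℕ => (Cnt (m^2) : ℝ) / ((m^2:ℕ):ℝ)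
        - (∑ k ∈ Finset.Icc 1 (m^2), e k) / ((m^2:ℕ):ℝ)) atTop (nhds 0) := by
      rw [Metric.tendsto_atTop]
      intro ε' hε'
      obtain ⟨t, ht⟩ := exists_nat_gt (1/ε')
      have ht0 : (0:ℝ) < t := lt_trans (by positivity) ht
      have htinv : (1:ℝ)/(t+1) < ε' := by
        rw [div_lt_iff₀ (by positivity)]
        rw [div_lt_iff₀ hε'] at ht
        nlinarith
      obtain ⟨s, hs⟩ := hG (α, t)
      have hAs : A s = α := by
        funext i
        simp only [hA, hs]
        exact Nat.max_eq_left (hα i)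
      have hTs : T s = t := by simp only [hT, hs]
      refine ⟨N s, fun m hm => ?_⟩
      have hm1 : 1 ≤ m := le_trans (hN1 s) hm
      have hm2pos : (0:ℝ) < ((m^2:ℕ):ℝ) := by
        have : 1 ≤ m^2 := by nlinarith
        exact_mod_cast this
      have hc := (hCset_mem s m ω).1 (hωC s m)
      rcases hc with hlt | hbound
      · omega
      · rw [hAs, hTs] at hbound
        rw [Real.dist_eq, sub_zero]
        have heq2 : (Cnt (m^2) : ℝ) / ((m^2:ℕ):ℝ) - (∑ k ∈ Finset.Icc 1 (m^2), e k) / ((m^2:ℕ):ℝ)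
            = SDsum q r m0 (digSeq ω) α (m^2) / ((m^2:ℕ):ℝ) := by
          rw [hSD_eq, sub_div]
        rw [heq2, abs_div, abs_of_pos hm2pos]
        rw [div_lt_iff₀ hm2pos]
        calc |SDsum q r m0 (digSeq ω) α (m^2)| < ((m^2:ℕ):ℝ)/(t+1) := hbound
          _ ≤ ε' * ((m^2:ℕ):ℝ) := by
              have h4 : 1 < ε' * ((t:ℝ)+1) := by
                rw [div_lt_iff₀ (by positivity : (0:ℝ) < (t:ℝ)+1)] at htinv
                linarith
              rw [div_le_iff₀ (by positivity : (0:ℝ) < (t:ℝ)+1)]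
              nlinarith [mul_le_mul_of_nonneg_left h4.le hm2pos.le]
    have hCsq : Tendsto (fun m : ℕ => (Cnt (m^2) : ℝ) / ((m^2:ℕ):ℝ)) atTop
        (nhds (∏ i, r (α i))) := by
      have := hdiff0.add hEsq
      rw [zero_add] at this
      apply this.congr
      intro m
      ring
    -- interpolation
    have hmono : Monotone Cnt := by
      intro a b hab
      apply Finset.card_le_card
      apply Finset.filter_subset_filter
      exact Finset.Icc_subset_Icc_right hab
    have hC0 : Cnt 0 = 0 := by
      rw [hCnt]
      simp
    have hstep : ∀ a b : ℕ, a ≤ b → Cnt b ≤ Cnt a + (b - a) := by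
      intro a b hab
      simp only [hCnt]
      have hsplit : Finset.Icc 1 b = Finset.Icc 1 a ∪ Finset.Icc (a+1) b := by
        ext k
        simp only [Finset.mem_Icc, Finset.mem_union]
        omega
      rw [hsplit, Finset.filter_union]
      calc ((Finset.Icc 1 a).filter _ ∪ (Finset.Icc (a+1) b).filter _).card
          ≤ ((Finset.Icc 1 a).filter _).card + ((Finset.Icc (a+1) b).filter _).card :=
            Finset.card_union_le _ _
        _ ≤ ((Finset.Icc 1 a).filter (fun k => ∀ i, digSeq ω (q i k) = α i)).card + (b - a) := by
            apply add_le_add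
            · exact le_refl _
            · calc ((Finset.Icc (a+1) b).filter _).card ≤ (Finset.Icc (a+1) b).card :=
                    Finset.card_filter_le _ _
                _ = b - a := by rw [Nat.card_Icc]; omega
    have hfinal := Helpers.interp Cnt hmono hC0 hstep _ hCsq
    apply hfinal.congr
    intro n
    rw [hNword]
  exact ⟨z, hz_mem, hz_irr, ⟨hz_mem, hz_irr, htend⟩, hz_le⟩
end
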